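/- arXiv:1802.02355 — 4 statements merged into one kernel-verified Lean document; each statement's English description precedes it below -/
import Mathlib

section
/- For n∈ℝ³ with n_h=(n₁,n₂)≠0, the vectors e₀(n) = (1/|n_h|)(-n₂, n₁, 0, 0) and e±(n) = (1/√2)(±i n₁n₃/(|n_h||n|), ±i n₂n₃/(|n_h||n|), ∓i |n_h|/|n|, 1) are eigenvectors of the matrix M(n) (defined below) with eigenvalues 0, +i|n_h|/|n|, and -i|n_h|/|n| respectively, and {e₀(n), e₊(n), e₋(n)} is an orthonormal family in ℂ⁴. -/
open Matrix Complex

/-- The eigenvector `e₀(n)` of the symbol `M(n)`. -/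
noncomputable def e0vec (n₁ n₂ n₃ : ℝ) : Fin 4 → ℂ :=
  ![((-n₂ / Real.sqrt (n₁ ^ 2 + n₂ ^ 2) : ℝ) : ℂ),
    ((n₁ / Real.sqrt (n₁ ^ 2 + n₂ ^ 2) : ℝ) : ℂ), 0, 0]

/-- The eigenvector `e₊(n)` of the symbol `M(n)`. -/
noncomputable def epvec (n₁ n₂ n₃ : ℝ) : Fin 4 → ℂ :=
  fun i => ((1 / Real.sqrt 2 : ℝ) : ℂ) *
    ![Complex.I * ((n₁ * n₃ / (Real.sqrt (n₁ ^ 2 + n₂ ^ 2) *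
        Real.sqrt (n₁ ^ 2 + n₂ ^ 2 + n₃ ^ 2)) : ℝ) : ℂ),
      Complex.I * ((n₂ * n₃ / (Real.sqrt (n₁ ^ 2 + n₂ ^ 2) *
        Real.sqrt (n₁ ^ 2 + n₂ ^ 2 + n₃ ^ 2)) : ℝ) : ℂ),
      -Complex.I * ((Real.sqrt (n₁ ^ 2 + n₂ ^ 2) /
        Real.sqrt (n₁ ^ 2 + n₂ ^ 2 + n₃ ^ 2) : ℝ) : ℂ),
      1] i

/-- The eigenvector `e₋(n)` of the symbol `M(n)`. -/
noncomputable def emvec (n₁ n₂ n₃ : ℝ) : Fin 4 → ℂ :=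
  fun i => ((1 / Real.sqrt 2 : ℝ) : ℂ) *
    ![-Complex.I * ((n₁ * n₃ / (Real.sqrt (n₁ ^ 2 + n₂ ^ 2) *
        Real.sqrt (n₁ ^ 2 + n₂ ^ 2 + n₃ ^ 2)) : ℝ) : ℂ),
      -Complex.I * ((n₂ * n₃ / (Real.sqrt (n₁ ^ 2 + n₂ ^ 2) *
        Real.sqrt (n₁ ^ 2 + n₂ ^ 2 + n₃ ^ 2)) : ℝ) : ℂ),
      Complex.I * ((Real.sqrt (n₁ ^ 2 + n₂ ^ 2) /
        Real.sqrt (n₁ ^ 2 + n₂ ^ 2 + n₃ ^ 2) : ℝ) : ℂ),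
      1] i

/-- The Hermitian inner product on `ℂ⁴` (conjugate-linear in the first variable). -/
noncomputable def herm4 (a b : Fin 4 → ℂ) : ℂ :=
  ∑ i : Fin 4, (starRingEnd ℂ) (a i) * b i

set_option maxHeartbeats 2000000 in
/-- `e₀(n)`, `e₊(n)`, `e₋(n)` are eigenvectors of `M(n)` with
eigenvalues `0`, `+i|n_h|/|n|`, `-i|n_h|/|n|` respectively, and they form an
orthonormal family in `ℂ⁴`. -/
theorem eigenvectors_symbol_PA (n₁ n₂ n₃ : ℝ) (hn : n₁ ^ 2 + n₂ ^ 2 ≠ 0)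
    (M : Matrix (Fin 4) (Fin 4) ℂ)
    (hM : M = !![0, 0, 0, -((n₁ * n₃ / (n₁ ^ 2 + n₂ ^ 2 + n₃ ^ 2) : ℝ) : ℂ);
                 0, 0, 0, -((n₂ * n₃ / (n₁ ^ 2 + n₂ ^ 2 + n₃ ^ 2) : ℝ) : ℂ);
                 0, 0, 0, ((1 - n₃ ^ 2 / (n₁ ^ 2 + n₂ ^ 2 + n₃ ^ 2) : ℝ) : ℂ);
                 0, 0, -1, 0]) :
    M.mulVec (e0vec n₁ n₂ n₃) = 0 ∧
    M.mulVec (epvec n₁ n₂ n₃) =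
      (Complex.I * ((Real.sqrt (n₁ ^ 2 + n₂ ^ 2) /
        Real.sqrt (n₁ ^ 2 + n₂ ^ 2 + n₃ ^ 2) : ℝ) : ℂ)) • epvec n₁ n₂ n₃ ∧
    M.mulVec (emvec n₁ n₂ n₃) =
      (-(Complex.I * ((Real.sqrt (n₁ ^ 2 + n₂ ^ 2) /
        Real.sqrt (n₁ ^ 2 + n₂ ^ 2 + n₃ ^ 2) : ℝ) : ℂ))) • emvec n₁ n₂ n₃ ∧
    herm4 (e0vec n₁ n₂ n₃) (e0vec n₁ n₂ n₃) = 1 ∧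
    herm4 (epvec n₁ n₂ n₃) (epvec n₁ n₂ n₃) = 1 ∧
    herm4 (emvec n₁ n₂ n₃) (emvec n₁ n₂ n₃) = 1 ∧
    herm4 (e0vec n₁ n₂ n₃) (epvec n₁ n₂ n₃) = 0 ∧
    herm4 (e0vec n₁ n₂ n₃) (emvec n₁ n₂ n₃) = 0 ∧
    herm4 (epvec n₁ n₂ n₃) (emvec n₁ n₂ n₃) = 0 := by

  have ha : (0:ℝ) < n₁ ^ 2 + n₂ ^ 2 := lt_of_le_of_ne (by positivity) (Ne.symm hn)
  have hb : (0:ℝ) < n₁ ^ 2 + n₂ ^ 2 + n₃ ^ 2 := by nlinarith [sq_nonneg n₃]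
  have hx : ((Real.sqrt (n₁ ^ 2 + n₂ ^ 2) : ℝ) : ℂ) ^ 2 = (n₁:ℂ) ^ 2 + (n₂:ℂ) ^ 2 := by
    rw [← Complex.ofReal_pow, Real.sq_sqrt ha.le]; push_cast; ring
  have hy : ((Real.sqrt (n₁ ^ 2 + n₂ ^ 2 + n₃ ^ 2) : ℝ) : ℂ) ^ 2
      = (n₁:ℂ) ^ 2 + (n₂:ℂ) ^ 2 + (n₃:ℂ) ^ 2 := by
    rw [← Complex.ofReal_pow, Real.sq_sqrt hb.le]; push_cast; ring
  have hz : ((Real.sqrt 2 : ℝ) : ℂ) ^ 2 = 2 := by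
    rw [← Complex.ofReal_pow, Real.sq_sqrt (by norm_num : (0:ℝ) ≤ 2)]; norm_num
  have hxne : ((Real.sqrt (n₁ ^ 2 + n₂ ^ 2) : ℝ) : ℂ) ≠ 0 := by
    simpa using (Real.sqrt_pos.mpr ha).ne'
  have hyne : ((Real.sqrt (n₁ ^ 2 + n₂ ^ 2 + n₃ ^ 2) : ℝ) : ℂ) ≠ 0 := by
    simpa using (Real.sqrt_pos.mpr hb).ne'
  have hzne : ((Real.sqrt 2 : ℝ) : ℂ) ≠ 0 := by
    simpa using (Real.sqrt_pos.mpr (by norm_num : (0:ℝ) < 2)).ne'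
  have hbne : ((n₁:ℂ) ^ 2 + (n₂:ℂ) ^ 2 + (n₃:ℂ) ^ 2) ≠ 0 := by
    rw [show ((n₁:ℂ) ^ 2 + (n₂:ℂ) ^ 2 + (n₃:ℂ) ^ 2)
        = ((n₁ ^ 2 + n₂ ^ 2 + n₃ ^ 2 : ℝ) : ℂ) by push_cast; ring]
    exact_mod_cast hb.ne'
  have hx4 : ((Real.sqrt (n₁ ^ 2 + n₂ ^ 2) : ℝ) : ℂ) ^ 4 = ((n₁:ℂ) ^ 2 + (n₂:ℂ) ^ 2) ^ 2 := by
    rw [show (_ : ℂ) ^ 4 = ((_ : ℂ) ^ 2) ^ 2 from by ring, hx]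
  have hy4 : ((Real.sqrt (n₁ ^ 2 + n₂ ^ 2 + n₃ ^ 2) : ℝ) : ℂ) ^ 4
      = ((n₁:ℂ) ^ 2 + (n₂:ℂ) ^ 2 + (n₃:ℂ) ^ 2) ^ 2 := by
    rw [show (_ : ℂ) ^ 4 = ((_ : ℂ) ^ 2) ^ 2 from by ring, hy]
  have hz4 : ((Real.sqrt 2 : ℝ) : ℂ) ^ 4 = 4 := by
    rw [show (_ : ℂ) ^ 4 = ((_ : ℂ) ^ 2) ^ 2 from by ring, hz]; norm_num
  have hx6 : ((Real.sqrt (n₁ ^ 2 + n₂ ^ 2) : ℝ) : ℂ) ^ 6 = ((n₁:ℂ) ^ 2 + (n₂:ℂ) ^ 2) ^ 3 := by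
    rw [show (_ : ℂ) ^ 6 = ((_ : ℂ) ^ 2) ^ 3 from by ring, hx]
  have hy6 : ((Real.sqrt (n₁ ^ 2 + n₂ ^ 2 + n₃ ^ 2) : ℝ) : ℂ) ^ 6
      = ((n₁:ℂ) ^ 2 + (n₂:ℂ) ^ 2 + (n₃:ℂ) ^ 2) ^ 3 := by
    rw [show (_ : ℂ) ^ 6 = ((_ : ℂ) ^ 2) ^ 3 from by ring, hy]
  have hz6 : ((Real.sqrt 2 : ℝ) : ℂ) ^ 6 = 8 := by
    rw [show (_ : ℂ) ^ 6 = ((_ : ℂ) ^ 2) ^ 3 from by ring, hz]; norm_num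
  have hx8 : ((Real.sqrt (n₁ ^ 2 + n₂ ^ 2) : ℝ) : ℂ) ^ 8 = ((n₁:ℂ) ^ 2 + (n₂:ℂ) ^ 2) ^ 4 := by
    rw [show (_ : ℂ) ^ 8 = ((_ : ℂ) ^ 2) ^ 4 from by ring, hx]
  have hy8 : ((Real.sqrt (n₁ ^ 2 + n₂ ^ 2 + n₃ ^ 2) : ℝ) : ℂ) ^ 8
      = ((n₁:ℂ) ^ 2 + (n₂:ℂ) ^ 2 + (n₃:ℂ) ^ 2) ^ 4 := by
    rw [show (_ : ℂ) ^ 8 = ((_ : ℂ) ^ 2) ^ 4 from by ring, hy]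
  have hz8 : ((Real.sqrt 2 : ℝ) : ℂ) ^ 8 = 16 := by
    rw [show (_ : ℂ) ^ 8 = ((_ : ℂ) ^ 2) ^ 4 from by ring, hz]; norm_num
  subst hM
  refine ⟨?_, ?_, ?_, ?_, ?_, ?_, ?_, ?_, ?_⟩
  · funext i; fin_cases i <;>
      simp [e0vec, Matrix.mulVec, dotProduct, Fin.sum_univ_four] <;>
      push_cast <;> field_simp <;> (try field_simp) <;> (try ring_nf) <;> (try field_simp) <;> (try ring_nf) <;> (try simp only [Complex.I_sq, hx, hy, hz, hx4, hy4, hz4, hx6, hy6, hz6, hx8, hy8, hz8]) <;> ring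
  · funext i; fin_cases i <;>
      simp [epvec, Matrix.mulVec, dotProduct, Fin.sum_univ_four] <;>
      push_cast <;> field_simp <;> (try field_simp) <;> (try ring_nf) <;> (try field_simp) <;> (try ring_nf) <;> (try simp only [Complex.I_sq, hx, hy, hz, hx4, hy4, hz4, hx6, hy6, hz6, hx8, hy8, hz8]) <;> ring
  · funext i; fin_cases i <;>
      simp [emvec, Matrix.mulVec, dotProduct, Fin.sum_univ_four] <;>
      push_cast <;> field_simp <;> (try field_simp) <;> (try ring_nf) <;> (try field_simp) <;> (try ring_nf) <;> (try simp only [Complex.I_sq, hx, hy, hz, hx4, hy4, hz4, hx6, hy6, hz6, hx8, hy8, hz8]) <;> ring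
  · simp [herm4, e0vec, Fin.sum_univ_four] <;> push_cast <;> field_simp <;> (try field_simp) <;> (try ring_nf) <;> (try field_simp) <;> (try ring_nf) <;> (try simp only [Complex.I_sq, hx, hy, hz, hx4, hy4, hz4, hx6, hy6, hz6, hx8, hy8, hz8]) <;> ring
  · simp [herm4, epvec, Fin.sum_univ_four] <;> push_cast <;> field_simp <;> (try field_simp) <;> (try ring_nf) <;> (try field_simp) <;> (try ring_nf) <;> (try simp only [Complex.I_sq, hx, hy, hz, hx4, hy4, hz4, hx6, hy6, hz6, hx8, hy8, hz8]) <;> ring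
  · simp [herm4, emvec, Fin.sum_univ_four] <;> push_cast <;> field_simp <;> (try field_simp) <;> (try ring_nf) <;> (try field_simp) <;> (try ring_nf) <;> (try simp only [Complex.I_sq, hx, hy, hz, hx4, hy4, hz4, hx6, hy6, hz6, hx8, hy8, hz8]) <;> ring
  · simp [herm4, e0vec, epvec, Fin.sum_univ_four] <;> push_cast <;> field_simp <;> (try field_simp) <;> (try ring_nf) <;> (try field_simp) <;> (try ring_nf) <;> (try simp only [Complex.I_sq, hx, hy, hz, hx4, hy4, hz4, hx6, hy6, hz6, hx8, hy8, hz8]) <;> ring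
  · simp [herm4, e0vec, emvec, Fin.sum_univ_four] <;> push_cast <;> field_simp <;> (try field_simp) <;> (try ring_nf) <;> (try field_simp) <;> (try ring_nf) <;> (try simp only [Complex.I_sq, hx, hy, hz, hx4, hy4, hz4, hx6, hy6, hz6, hx8, hy8, hz8]) <;> ring
  · simp [herm4, epvec, emvec, Fin.sum_univ_four] <;> push_cast <;> field_simp <;> (try field_simp) <;> (try ring_nf) <;> (try field_simp) <;> (try ring_nf) <;> (try simp only [Complex.I_sq, hx, hy, hz, hx4, hy4, hz4, hx6, hy6, hz6, hx8, hy8, hz8]) <;> ring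
end

section
/- Fix k_h ∈ ℤ² and n ∈ ℤ³ with k_h ≠ 0, n_h - k_h ≠ 0, n_h ≠ 0. The set of k₃ ∈ ℤ such that ωᵃ(k_h,k₃) + ωᵇ(n_h-k_h, n₃-k₃) = ω^c(n) for some fixed choice of signs a,b,c ∈ {+,-}, where ω^±(p) = ±|p_h|/|p|, is finite, with cardinality at most 8. -/
open Polynomial

/-- The frequency `ω⁺` as a function of the three integer components. -/
noncomputable def omega3 (p₁ p₂ p₃ : ℤ) : ℝ :=
  Real.sqrt ((p₁ : ℝ) ^ 2 + (p₂ : ℝ) ^ 2) /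
    Real.sqrt ((p₁ : ℝ) ^ 2 + (p₂ : ℝ) ^ 2 + (p₃ : ℝ) ^ 2)

/-- The resonance polynomial obtained by clearing the square roots. -/
noncomputable def resP (A B Cn t : ℝ) : Polynomial ℝ :=
  (Polynomial.C Cn * ((X : Polynomial ℝ) ^ 2 + Polynomial.C A) * ((Polynomial.C t - X) ^ 2 + Polynomial.C B)
    - Polynomial.C (A * (Cn + t ^ 2)) * ((Polynomial.C t - X) ^ 2 + Polynomial.C B)
    - Polynomial.C (B * (Cn + t ^ 2)) * ((X : Polynomial ℝ) ^ 2 + Polynomial.C A)) ^ 2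
  - Polynomial.C (4 * A * B * (Cn + t ^ 2) ^ 2) *
      (((X : Polynomial ℝ) ^ 2 + Polynomial.C A) * ((Polynomial.C t - X) ^ 2 + Polynomial.C B))

lemma resP_eval (A B Cn t x : ℝ) :
    (resP A B Cn t).eval x =
      (Cn * (x ^ 2 + A) * ((t - x) ^ 2 + B)
        - A * (Cn + t ^ 2) * ((t - x) ^ 2 + B)
        - B * (Cn + t ^ 2) * (x ^ 2 + A)) ^ 2
      - 4 * A * B * (Cn + t ^ 2) ^ 2 * ((x ^ 2 + A) * ((t - x) ^ 2 + B)) := by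
  simp [resP]

lemma resP_natDegree (A B Cn t : ℝ) (hC : Cn ≠ 0) : (resP A B Cn t).natDegree = 8 := by
  unfold resP
  compute_degree!

lemma resP_ne_zero (A B Cn t : ℝ) (hC : Cn ≠ 0) : resP A B Cn t ≠ 0 := by
  intro h
  have h8 := resP_natDegree A B Cn t hC
  rw [h] at h8
  simp at h8

lemma key_eval (A B Cn t x εa εb εc : ℝ) (hA : 0 < A) (hB : 0 < B) (hC : 0 < Cn)
    (ha : εa ^ 2 = 1) (hb : εb ^ 2 = 1) (hc : εc ^ 2 = 1)
    (heq : εa * (Real.sqrt A / Real.sqrt (A + x ^ 2))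
        + εb * (Real.sqrt B / Real.sqrt (B + (t - x) ^ 2))
        = εc * (Real.sqrt Cn / Real.sqrt (Cn + t ^ 2))) :
    (Cn * (x ^ 2 + A) * ((t - x) ^ 2 + B)
        - A * (Cn + t ^ 2) * ((t - x) ^ 2 + B)
        - B * (Cn + t ^ 2) * (x ^ 2 + A)) ^ 2
      - 4 * A * B * (Cn + t ^ 2) ^ 2 * ((x ^ 2 + A) * ((t - x) ^ 2 + B)) = 0 := by
  have hup : (0:ℝ) < A + x ^ 2 := by positivity
  have hvp : (0:ℝ) < B + (t - x) ^ 2 := by positivity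
  have hwp : (0:ℝ) < Cn + t ^ 2 := by positivity
  set f := εa * (Real.sqrt A / Real.sqrt (A + x ^ 2)) with hfdef
  set g := εb * (Real.sqrt B / Real.sqrt (B + (t - x) ^ 2)) with hgdef
  set h := εc * (Real.sqrt Cn / Real.sqrt (Cn + t ^ 2)) with hhdef
  have hf2 : f ^ 2 * (x ^ 2 + A) = A := by
    rw [hfdef, mul_pow, div_pow, Real.sq_sqrt hA.le, Real.sq_sqrt hup.le, ha, one_mul,
      show x ^ 2 + A = A + x ^ 2 from add_comm _ _, div_mul_cancel₀ _ hup.ne']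
  have hg2 : g ^ 2 * ((t - x) ^ 2 + B) = B := by
    rw [hgdef, mul_pow, div_pow, Real.sq_sqrt hB.le, Real.sq_sqrt hvp.le, hb, one_mul,
      show (t - x) ^ 2 + B = B + (t - x) ^ 2 from add_comm _ _, div_mul_cancel₀ _ hvp.ne']
  have hh2 : h ^ 2 * (Cn + t ^ 2) = Cn := by
    rw [hhdef, mul_pow, div_pow, Real.sq_sqrt hC.le, Real.sq_sqrt hwp.le, hc, one_mul,
      div_mul_cancel₀ _ hwp.ne']
  have hfg : 2 * (f * g) = h ^ 2 - f ^ 2 - g ^ 2 := by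
    linear_combination (f + g + h) * heq
  set u := x ^ 2 + A with hudef
  set v := (t - x) ^ 2 + B with hvdef
  set w := Cn + t ^ 2 with hwdef
  rw [show A = f ^ 2 * u from hf2.symm, show B = g ^ 2 * v from hg2.symm,
    show Cn = h ^ 2 * w from hh2.symm]
  linear_combination (-((u * v * w) ^ 2 * (h ^ 2 - f ^ 2 - g ^ 2 + 2 * f * g))) * hfg

lemma sq_add_sq_pos_of_ne (a b : ℤ) (h : (a, b) ≠ (0, 0)) :
    0 < (a : ℝ) ^ 2 + (b : ℝ) ^ 2 := by
  rcases eq_or_ne a 0 with rfl | ha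
  · rcases eq_or_ne b 0 with rfl | hb
    · exact absurd rfl h
    · have : (b : ℝ) ≠ 0 := Int.cast_ne_zero.mpr hb
      positivity
  · have : (a : ℝ) ≠ 0 := Int.cast_ne_zero.mpr ha
    positivity

/-- for fixed `k_h ∈ ℤ²` and `n ∈ ℤ³` with `k_h ≠ 0`, `n_h - k_h ≠ 0`,
`n_h ≠ 0`, and for any fixed signs `a, b, c ∈ {+, -}`, the set of `k₃ ∈ ℤ` satisfying
the resonance `ωᵃ(k_h,k₃) + ωᵇ(n_h-k_h, n₃-k₃) = ω^c(n)` is finite, of cardinality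
at most `8`. -/
theorem resonant_fiber_finite (k₁ k₂ : ℤ) (n : ℤ × ℤ × ℤ)
    (εa εb εc : ℝ)
    (ha : εa = 1 ∨ εa = -1) (hb : εb = 1 ∨ εb = -1) (hc : εc = 1 ∨ εc = -1)
    (hkh : (k₁, k₂) ≠ (0, 0)) (hmh : (n.1 - k₁, n.2.1 - k₂) ≠ (0, 0))
    (hnh : (n.1, n.2.1) ≠ (0, 0)) :
    {k₃ : ℤ | εa * omega3 k₁ k₂ k₃ + εb * omega3 (n.1 - k₁) (n.2.1 - k₂) (n.2.2 - k₃)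
        = εc * omega3 n.1 n.2.1 n.2.2}.Finite ∧
    {k₃ : ℤ | εa * omega3 k₁ k₂ k₃ + εb * omega3 (n.1 - k₁) (n.2.1 - k₂) (n.2.2 - k₃)
        = εc * omega3 n.1 n.2.1 n.2.2}.ncard ≤ 8 := by
  have ha2 : εa ^ 2 = 1 := by rcases ha with h | h <;> rw [h] <;> norm_num
  have hb2 : εb ^ 2 = 1 := by rcases hb with h | h <;> rw [h] <;> norm_num
  have hc2 : εc ^ 2 = 1 := by rcases hc with h | h <;> rw [h] <;> norm_num
  have hA : 0 < (k₁ : ℝ) ^ 2 + (k₂ : ℝ) ^ 2 := sq_add_sq_pos_of_ne _ _ hkh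
  have hB' : 0 < ((n.1 - k₁ : ℤ) : ℝ) ^ 2 + ((n.2.1 - k₂ : ℤ) : ℝ) ^ 2 :=
    sq_add_sq_pos_of_ne _ _ hmh
  have hB : 0 < ((n.1 : ℝ) - k₁) ^ 2 + ((n.2.1 : ℝ) - k₂) ^ 2 := by push_cast at hB'; exact hB'
  have hC : 0 < (n.1 : ℝ) ^ 2 + (n.2.1 : ℝ) ^ 2 := sq_add_sq_pos_of_ne _ _ hnh
  set p : Polynomial ℝ :=
    resP ((k₁ : ℝ) ^ 2 + (k₂ : ℝ) ^ 2) (((n.1 : ℝ) - k₁) ^ 2 + ((n.2.1 : ℝ) - k₂) ^ 2)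
      ((n.1 : ℝ) ^ 2 + (n.2.1 : ℝ) ^ 2) (n.2.2 : ℝ) with hpdef
  have hp : p ≠ 0 := resP_ne_zero _ _ _ _ hC.ne'
  have hdeg : p.natDegree = 8 := resP_natDegree _ _ _ _ hC.ne'
  have hmem : ∀ k₃ : ℤ, k₃ ∈ {k₃ : ℤ | εa * omega3 k₁ k₂ k₃
        + εb * omega3 (n.1 - k₁) (n.2.1 - k₂) (n.2.2 - k₃) = εc * omega3 n.1 n.2.1 n.2.2} →
      ((k₃ : ℝ)) ∈ (p.roots.toFinset : Set ℝ) := by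
    intro k₃ hk
    simp only [Set.mem_setOf_eq, omega3] at hk
    push_cast at hk
    have h0 := key_eval ((k₁ : ℝ) ^ 2 + (k₂ : ℝ) ^ 2)
      (((n.1 : ℝ) - k₁) ^ 2 + ((n.2.1 : ℝ) - k₂) ^ 2)
      ((n.1 : ℝ) ^ 2 + (n.2.1 : ℝ) ^ 2) (n.2.2 : ℝ) (k₃ : ℝ) εa εb εc hA hB hC ha2 hb2 hc2 hk
    simp only [Finset.coe_sort_coe, Multiset.mem_toFinset, Finset.mem_coe]
    rw [Polynomial.mem_roots hp]
    rw [Polynomial.IsRoot, hpdef, resP_eval]; exact h0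
  constructor
  · exact ((p.roots.toFinset.finite_toSet).preimage
      (Int.cast_injective.injOn)).subset hmem
  · calc {k₃ : ℤ | εa * omega3 k₁ k₂ k₃ + εb * omega3 (n.1 - k₁) (n.2.1 - k₂) (n.2.2 - k₃)
        = εc * omega3 n.1 n.2.1 n.2.2}.ncard
        ≤ (↑p.roots.toFinset : Set ℝ).ncard :=
          Set.ncard_le_ncard_of_injOn _ hmem Int.cast_injective.injOn
            (p.roots.toFinset.finite_toSet)
      _ = p.roots.toFinset.card := Set.ncard_coe_finset _
      _ ≤ Multiset.card p.roots := Multiset.toFinset_card_le _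
      _ ≤ p.natDegree := p.card_roots'
      _ ≤ 8 := by rw [hdeg]
end

section
/- Let (a_n), (b_n), (c_n) be families of nonnegative reals indexed by n ∈ ℤ³, each square-summable with weights: Σ_n (1+|n|)|a_n|² < ∞, Σ_n (1+|n|)|b_n|² < ∞, Σ_n |c_n|² < ∞. Suppose for each (k_h, n) ∈ ℤ² × ℤ³ the fiber J(k_h,n) ⊆ ℤ (a subset of the k₃-values) satisfies #J(k_h,n) ≤ 8. Then Σ_{(k_h,n)} Σ_{k₃ ∈ J(k_h,n)} a_{(k_h,k₃)} b_{n-(k_h,k₃)} c_n ≤ C ‖a‖_{H^{1/2}} ‖b‖_{H^{1/2}} ‖c‖_{L²}, where the norms are ‖a‖²_{H^{1/2}} = Σ_n (1+|n|²)^{1/2}|a_n|², etc., and C is a universal constant. -/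
open scoped ENNReal NNReal
open MeasureTheory

/-- `|n|²` for a frequency `n ∈ ℤ³`. -/
noncomputable def freqSq (n : ℤ × ℤ × ℤ) : ℝ :=
  (n.1 : ℝ) ^ 2 + (n.2.1 : ℝ) ^ 2 + (n.2.2 : ℝ) ^ 2

namespace TriRes

noncomputable def q : ℝ≥0∞ := (2:ℝ≥0∞)⁻¹ ^ ((1:ℝ)/2)

lemma rpow_half_sq (x : ℝ≥0∞) : (x ^ ((1:ℝ)/2)) ^ (2:ℕ) = x := by
  rw [← ENNReal.rpow_natCast (x ^ ((1:ℝ)/2)) 2, ← ENNReal.rpow_mul]; norm_num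

lemma sq_rpow_half (x : ℝ≥0∞) : (x ^ (2:ℕ)) ^ ((1:ℝ)/2) = x := by
  rw [← ENNReal.rpow_natCast x 2, ← ENNReal.rpow_mul]; norm_num

lemma mul_rpow_half (x y : ℝ≥0∞) : (x * y) ^ ((1:ℝ)/2) = x ^ ((1:ℝ)/2) * y ^ ((1:ℝ)/2) :=
  ENNReal.mul_rpow_of_nonneg _ _ (by norm_num)

lemma rpow_half_mono {x y : ℝ≥0∞} (h : x ≤ y) : x ^ ((1:ℝ)/2) ≤ y ^ ((1:ℝ)/2) :=
  ENNReal.rpow_le_rpow h (by norm_num)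

lemma q_le : q ≤ 3/4 := by
  have h1 : ((2:ℝ≥0∞)⁻¹) ≤ (3/4) ^ (2:ℕ) := by
    have h : ((3:ℝ≥0∞)/4) = ((3/4 : ℝ≥0) : ℝ≥0∞) := by simp [ENNReal.coe_div]
    have h2 : ((2:ℝ≥0∞)⁻¹) = ((2⁻¹ : ℝ≥0) : ℝ≥0∞) := by simp [ENNReal.coe_inv]
    rw [h, h2, ← ENNReal.coe_pow, ENNReal.coe_le_coe, ← NNReal.coe_le_coe]
    norm_num
  calc q ≤ ((3/4) ^ (2:ℕ)) ^ ((1:ℝ)/2) := rpow_half_mono h1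
    _ = 3/4 := sq_rpow_half _

lemma geom_q : ∑' d : ℕ, q ^ d ≤ 4 := by
  have h : ((3:ℝ≥0∞)/4) = ((3/4 : ℝ≥0) : ℝ≥0∞) := by simp [ENNReal.coe_div]
  have h1 : ∀ d : ℕ, q ^ d ≤ (((3/4 : ℝ≥0) : ℝ≥0∞)) ^ d := fun d => by
    rw [← h]; exact pow_le_pow_left' q_le d
  calc ∑' d : ℕ, q ^ d ≤ ∑' d : ℕ, (((3/4 : ℝ≥0) : ℝ≥0∞)) ^ d := ENNReal.tsum_le_tsum h1
    _ = (1 - ((3/4 : ℝ≥0) : ℝ≥0∞))⁻¹ := ENNReal.tsum_geometric _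
    _ = 4 := by
        rw [show (1:ℝ≥0∞) = ((1:ℝ≥0):ℝ≥0∞) by simp, ← ENNReal.coe_sub,
          show ((1:ℝ≥0) - 3/4) = 4⁻¹ by rw [← NNReal.coe_inj, NNReal.coe_sub (by rw [← NNReal.coe_le_coe]; norm_num)]; norm_num, ENNReal.coe_inv (by norm_num), inv_inv]
        norm_num

lemma row_sum (i : ℕ) : ∑' j : ℕ, (if i ≤ j then q ^ (j - i) else 0) ≤ 4 := by
  have hinj : Function.Injective (fun d : ℕ => i + d) := fun x y h => by
    simpa using h
  have hsupp : Function.support (fun j : ℕ => if i ≤ j then q ^ (j - i) else 0)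
      ⊆ Set.range (fun d : ℕ => i + d) := by
    intro j hj
    by_cases hij : i ≤ j
    · exact ⟨j - i, by simp; omega⟩
    · exfalso; apply hj; simp [if_neg hij]
  have h := Function.Injective.tsum_eq hinj hsupp
  simp only [add_tsub_cancel_left, le_add_iff_nonneg_right, zero_le, if_true] at h
  rw [← h]; exact geom_q

lemma col_sum (j : ℕ) : ∑' i : ℕ, (if i ≤ j then q ^ (j - i) else 0) ≤ 4 := by
  have h : ∑' i : ℕ, (if i ≤ j then q ^ (j - i) else 0)
      = ∑ i ∈ Finset.range (j+1), (if i ≤ j then q ^ (j - i) else 0) := by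
    apply tsum_eq_sum
    intro i hi
    simp only [Finset.mem_range] at hi
    rw [if_neg (by omega)]
  rw [h]
  calc ∑ i ∈ Finset.range (j+1), (if i ≤ j then q ^ (j - i) else 0)
      = ∑ i ∈ Finset.range (j+1), q ^ (j - i) := by
        apply Finset.sum_congr rfl; intro i hi
        simp only [Finset.mem_range] at hi
        rw [if_pos (by omega)]
    _ = ∑ d ∈ Finset.range (j+1), q ^ d := by
        rw [← Finset.sum_range_reflect (fun d => q ^ d) (j+1)]
        apply Finset.sum_congr rfl; intro i hi
        simp only [Finset.mem_range] at hi
        norm_num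
    _ ≤ ∑' d : ℕ, q ^ d := ENNReal.sum_le_tsum _
    _ ≤ 4 := geom_q

lemma four_rpow_half : (4:ℝ≥0∞) ^ ((1:ℝ)/2) = 2 := by
  rw [show (4:ℝ≥0∞) = 2^(2:ℕ) by norm_num, sq_rpow_half]

lemma cs_tsum {ι : Type*} [Countable ι] [MeasurableSpace ι] [MeasurableSingletonClass ι]
    (f g : ι → ℝ≥0∞) :
    ∑' i, f i * g i ≤ (∑' i, f i ^ (2:ℕ)) ^ ((1:ℝ)/2) * (∑' i, g i ^ (2:ℕ)) ^ ((1:ℝ)/2) := by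
  have h := ENNReal.lintegral_mul_le_Lp_mul_Lq (Measure.count : Measure ι)
    (Real.HolderConjugate.conjExponent (by norm_num : (1:ℝ) < 2))
    (measurable_of_countable f).aemeasurable (measurable_of_countable g).aemeasurable
  simp only [Pi.mul_apply, lintegral_count, Real.conjExponent] at h
  norm_num at h
  convert h using 4 <;> rw [← ENNReal.rpow_natCast] <;> norm_num

lemma schur (X Y : ℕ → ℝ≥0∞) :
    ∑' ij : ℕ×ℕ, (if ij.1 ≤ ij.2 then q ^ (ij.2 - ij.1) else 0) * X ij.1 * Y ij.2
      ≤ 4 * ((∑' i, X i ^ (2:ℕ)) ^ ((1:ℝ)/2)) * ((∑' j, Y j ^ (2:ℕ)) ^ ((1:ℝ)/2)) := by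
  set W : ℕ×ℕ → ℝ≥0∞ := fun ij => if ij.1 ≤ ij.2 then q ^ (ij.2 - ij.1) else 0 with hW
  have key : ∀ ij : ℕ×ℕ, W ij * X ij.1 * Y ij.2
      = ((W ij * X ij.1 ^ (2:ℕ)) ^ ((1:ℝ)/2)) * ((W ij * Y ij.2 ^ (2:ℕ)) ^ ((1:ℝ)/2)) := by
    intro ij
    rw [← mul_rpow_half]
    have h : W ij * X ij.1 ^ (2:ℕ) * (W ij * Y ij.2 ^ (2:ℕ)) = (W ij * X ij.1 * Y ij.2)^(2:ℕ) := by
      ring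
    rw [h, sq_rpow_half]
  calc ∑' ij : ℕ×ℕ, W ij * X ij.1 * Y ij.2
      = ∑' ij : ℕ×ℕ, ((W ij * X ij.1 ^ (2:ℕ)) ^ ((1:ℝ)/2)) * ((W ij * Y ij.2 ^ (2:ℕ)) ^ ((1:ℝ)/2)) :=
        tsum_congr key
    _ ≤ (∑' ij : ℕ×ℕ, ((W ij * X ij.1 ^ (2:ℕ)) ^ ((1:ℝ)/2)) ^ (2:ℕ)) ^ ((1:ℝ)/2)
        * (∑' ij : ℕ×ℕ, ((W ij * Y ij.2 ^ (2:ℕ)) ^ ((1:ℝ)/2)) ^ (2:ℕ)) ^ ((1:ℝ)/2) :=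
        cs_tsum _ _
    _ = (∑' ij : ℕ×ℕ, W ij * X ij.1 ^ (2:ℕ)) ^ ((1:ℝ)/2)
        * (∑' ij : ℕ×ℕ, W ij * Y ij.2 ^ (2:ℕ)) ^ ((1:ℝ)/2) := by
        simp_rw [rpow_half_sq]
    _ ≤ (4 * ∑' i, X i ^ (2:ℕ)) ^ ((1:ℝ)/2) * (4 * ∑' j, Y j ^ (2:ℕ)) ^ ((1:ℝ)/2) := by
        gcongr
        · -- rows
          rw [ENNReal.tsum_prod']
          calc ∑' i, ∑' j, W (i,j) * X i ^ (2:ℕ)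
              = ∑' i, X i ^ (2:ℕ) * ∑' j, W (i,j) := by
                refine tsum_congr fun i => ?_
                rw [← ENNReal.tsum_mul_left]
                exact tsum_congr fun j => mul_comm _ _
            _ ≤ ∑' i, X i ^ (2:ℕ) * 4 := ENNReal.tsum_le_tsum fun i =>
                mul_le_mul_right (row_sum i) _
            _ = 4 * ∑' i, X i ^ (2:ℕ) := by
                rw [ENNReal.tsum_mul_right, mul_comm]
        · -- columns
          rw [ENNReal.tsum_prod', ENNReal.tsum_comm]
          calc ∑' j, ∑' i, W (i,j) * Y j ^ (2:ℕ)
              = ∑' j, Y j ^ (2:ℕ) * ∑' i, W (i,j) := by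
                refine tsum_congr fun j => ?_
                rw [← ENNReal.tsum_mul_left]
                exact tsum_congr fun i => mul_comm _ _
            _ ≤ ∑' j, Y j ^ (2:ℕ) * 4 := ENNReal.tsum_le_tsum fun j =>
                mul_le_mul_right (col_sum j) _
            _ = 4 * ∑' j, Y j ^ (2:ℕ) := by
                rw [ENNReal.tsum_mul_right, mul_comm]
    _ = 4 * ((∑' i, X i ^ (2:ℕ)) ^ ((1:ℝ)/2)) * ((∑' j, Y j ^ (2:ℕ)) ^ ((1:ℝ)/2)) := by
        rw [mul_rpow_half, mul_rpow_half, four_rpow_half]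
        ring

/-- dyadic level of a 2D frequency -/
def lev (k : ℤ × ℤ) : ℕ := Nat.log2 (2 + k.1.natAbs + k.2.natAbs)

lemma two_pow_lev_le (k : ℤ × ℤ) : 2 ^ lev k ≤ 2 + k.1.natAbs + k.2.natAbs :=
  Nat.log2_self_le (by omega)

lemma lt_two_pow_lev (k : ℤ × ℤ) : 2 + k.1.natAbs + k.2.natAbs < 2 ^ (lev k + 1) :=
  Nat.lt_log2_self

/-- cardinality of a dyadic block -/
lemma tsum_ind_lev_le (i : ℕ) :
    ∑' k : ℤ × ℤ, (if lev k = i then (1:ℝ≥0∞) else 0) ≤ 2 ^ (2*i+6) := by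
  classical
  set M : ℕ := 2 ^ (i+1) with hM
  set s : Finset (ℤ × ℤ) := Finset.Icc (-(M:ℤ)) (M:ℤ) ×ˢ Finset.Icc (-(M:ℤ)) (M:ℤ) with hs
  have hmem : ∀ k : ℤ × ℤ, lev k = i → k ∈ s := by
    intro k hk
    have h1 := lt_two_pow_lev k
    rw [hk, ← hM] at h1
    simp only [hs, Finset.mem_product, Finset.mem_Icc]
    omega
  have heq : ∑' k : ℤ × ℤ, (if lev k = i then (1:ℝ≥0∞) else 0)
      = ∑ k ∈ s, (if lev k = i then (1:ℝ≥0∞) else 0) := by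
    apply tsum_eq_sum
    intro k hk
    rw [if_neg (fun h => hk (hmem k h))]
  have hcard : s.card = (2*M+1) * (2*M+1) := by
    rw [hs, Finset.card_product, Int.card_Icc]
    have h2 : ((M:ℤ) + 1 - -(M:ℤ)).toNat = 2*M+1 := by omega
    rw [h2]
  have hcard2 : s.card ≤ 2 ^ (2*i+6) := by
    rw [hcard]
    have h1 : 2*M+1 ≤ 2 ^ (i+3) := by
      have h0 : (0:ℕ) < 2 ^ (i+1) := Nat.pow_pos (by norm_num)
      have h3 : (2:ℕ) ^ (i+3) = 4 * 2 ^ (i+1) := by ring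
      omega
    calc (2*M+1) * (2*M+1) ≤ 2 ^ (i+3) * 2 ^ (i+3) := Nat.mul_le_mul h1 h1
      _ = 2 ^ (2*i+6) := by ring
  rw [heq]
  calc ∑ k ∈ s, (if lev k = i then (1:ℝ≥0∞) else 0) ≤ ∑ _k ∈ s, (1:ℝ≥0∞) := by
        apply Finset.sum_le_sum; intro k _; split <;> simp
    _ = (s.card : ℝ≥0∞) := by simp
    _ ≤ ((2 ^ (2*i+6) : ℕ) : ℝ≥0∞) := Nat.cast_le.mpr hcard2
    _ = 2 ^ (2*i+6) := by push_cast; ring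

lemma pow_rpow_half (x : ℝ≥0∞) (i : ℕ) : (x ^ i) ^ ((1:ℝ)/2) = (x ^ ((1:ℝ)/2)) ^ i := by
  rw [← ENNReal.rpow_natCast x i, ← ENNReal.rpow_mul, mul_comm, ENNReal.rpow_mul,
    ENNReal.rpow_natCast]

lemma q_mul_q : q * q = (2:ℝ≥0∞)⁻¹ := by
  have h := rpow_half_sq ((2:ℝ≥0∞)⁻¹)
  rwa [pow_two] at h

lemma two_pow_q_pow {i j : ℕ} (hij : i ≤ j) : (2:ℝ≥0∞)^i * (q^i * q^j) = q^(j-i) := by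
  have hj : q^j = q^(j-i) * q^i := by rw [← pow_add]; congr 1; omega
  rw [hj]
  have : (2:ℝ≥0∞)^i * (q^i * (q^(j-i) * q^i)) = ((2:ℝ≥0∞)^i * (q*q)^i) * q^(j-i) := by
    rw [mul_pow]; ring
  rw [this, q_mul_q, ← mul_pow, ENNReal.mul_inv_cancel (by norm_num) (by norm_num), one_pow,
    one_mul]

/-- The quadratic convolution estimate `ℓ¹ * ℓ² * ℓ²`. -/
lemma conv_basic (φ ψ h : ℤ×ℤ → ℝ≥0∞) :
    ∑' km : (ℤ×ℤ)×(ℤ×ℤ), φ km.1 * ψ (km.2 - km.1) * h km.2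
    ≤ (∑' k, φ k) * (∑' k, ψ k ^ (2:ℕ)) ^ ((1:ℝ)/2) * (∑' k, h k ^ (2:ℕ)) ^ ((1:ℝ)/2) := by
  have h1 : ∑' km : (ℤ×ℤ)×(ℤ×ℤ), φ km.1 * ψ (km.2 - km.1) * h km.2
      = ∑' m : ℤ×ℤ, (∑' k : ℤ×ℤ, φ k * ψ (m - k)) * h m := by
    rw [ENNReal.tsum_prod']
    rw [ENNReal.tsum_comm]
    refine tsum_congr fun m => ?_
    have he : ∀ a : ℤ×ℤ, φ (a, m).1 * ψ ((a, m).2 - (a, m).1) * h (a, m).2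
        = φ a * ψ (m - a) * h m := fun a => rfl
    rw [tsum_congr he, ENNReal.tsum_mul_right]
  rw [h1]
  have h2 : ∀ m : ℤ×ℤ, (∑' k : ℤ×ℤ, φ k * ψ (m - k)) ^ (2:ℕ)
      ≤ (∑' k, φ k) * (∑' k : ℤ×ℤ, φ k * ψ (m - k) ^ (2:ℕ)) := by
    intro m
    have hcs := cs_tsum (fun k : ℤ×ℤ => φ k ^ ((1:ℝ)/2))
      (fun k : ℤ×ℤ => φ k ^ ((1:ℝ)/2) * ψ (m - k))
    have e1 : ∀ k : ℤ×ℤ, φ k ^ ((1:ℝ)/2) * (φ k ^ ((1:ℝ)/2) * ψ (m - k)) = φ k * ψ (m - k) := by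
      intro k
      rw [← mul_assoc, ← pow_two, rpow_half_sq]
    have e2 : ∀ k : ℤ×ℤ, (φ k ^ ((1:ℝ)/2)) ^ (2:ℕ) = φ k := fun k => rpow_half_sq _
    have e3 : ∀ k : ℤ×ℤ, (φ k ^ ((1:ℝ)/2) * ψ (m - k)) ^ (2:ℕ)
        = φ k * ψ (m - k) ^ (2:ℕ) := by
      intro k; rw [mul_pow, rpow_half_sq]
    simp_rw [e1, e2, e3] at hcs
    calc (∑' k : ℤ×ℤ, φ k * ψ (m - k)) ^ (2:ℕ)
        ≤ ((∑' k, φ k) ^ ((1:ℝ)/2) * (∑' k : ℤ×ℤ, φ k * ψ (m - k) ^ (2:ℕ)) ^ ((1:ℝ)/2)) ^ (2:ℕ) :=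
          pow_le_pow_left' hcs 2
      _ = (∑' k, φ k) * (∑' k : ℤ×ℤ, φ k * ψ (m - k) ^ (2:ℕ)) := by
          rw [mul_pow, rpow_half_sq, rpow_half_sq]
  have h3 : ∑' m : ℤ×ℤ, (∑' k, φ k) * (∑' k : ℤ×ℤ, φ k * ψ (m - k) ^ (2:ℕ))
      = ((∑' k, φ k) ^ (2:ℕ)) * (∑' k, ψ k ^ (2:ℕ)) := by
    rw [ENNReal.tsum_mul_left, ENNReal.tsum_comm]
    have : ∀ k : ℤ×ℤ, ∑' m : ℤ×ℤ, φ k * ψ (m - k) ^ (2:ℕ)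
        = φ k * ∑' x, ψ x ^ (2:ℕ) := by
      intro k
      rw [ENNReal.tsum_mul_left]
      congr 1
      exact Equiv.tsum_eq (Equiv.subRight k) (fun x : ℤ×ℤ => ψ x ^ (2:ℕ))
    rw [tsum_congr this, ENNReal.tsum_mul_right, pow_two]
    ring
  calc ∑' m : ℤ×ℤ, (∑' k : ℤ×ℤ, φ k * ψ (m - k)) * h m
      ≤ (∑' m : ℤ×ℤ, (∑' k : ℤ×ℤ, φ k * ψ (m - k)) ^ (2:ℕ)) ^ ((1:ℝ)/2)
        * (∑' m, h m ^ (2:ℕ)) ^ ((1:ℝ)/2) := cs_tsum _ _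
    _ ≤ (((∑' k, φ k) ^ (2:ℕ)) * (∑' k, ψ k ^ (2:ℕ))) ^ ((1:ℝ)/2)
        * (∑' m, h m ^ (2:ℕ)) ^ ((1:ℝ)/2) := by
        gcongr
        calc ∑' m : ℤ×ℤ, (∑' k : ℤ×ℤ, φ k * ψ (m - k)) ^ (2:ℕ)
            ≤ ∑' m : ℤ×ℤ, (∑' k, φ k) * (∑' k : ℤ×ℤ, φ k * ψ (m - k) ^ (2:ℕ)) :=
              ENNReal.tsum_le_tsum h2
          _ = ((∑' k, φ k) ^ (2:ℕ)) * (∑' k, ψ k ^ (2:ℕ)) := h3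
    _ = (∑' k, φ k) * (∑' k, ψ k ^ (2:ℕ)) ^ ((1:ℝ)/2) * (∑' m, h m ^ (2:ℕ)) ^ ((1:ℝ)/2) := by
        rw [mul_rpow_half, sq_rpow_half]

/-- restriction to a dyadic block -/
noncomputable def restr (i : ℕ) (f : ℤ×ℤ → ℝ≥0∞) (k : ℤ×ℤ) : ℝ≥0∞ :=
  if lev k = i then f k else 0

/-- weighted dyadic piece of the `H^{1/2}` norm -/
noncomputable def Fi (f : ℤ×ℤ → ℝ≥0∞) (i : ℕ) : ℝ≥0∞ :=
  ∑' k : ℤ×ℤ, (2:ℝ≥0∞)^(lev k) * restr i f k ^ (2:ℕ)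

lemma restr_l2 (f : ℤ×ℤ → ℝ≥0∞) (i : ℕ) :
    ∑' k : ℤ×ℤ, restr i f k ^ (2:ℕ) = ((2:ℝ≥0∞)⁻¹)^i * Fi f i := by
  rw [Fi, ← ENNReal.tsum_mul_left]
  refine tsum_congr fun k => ?_
  by_cases h : lev k = i
  · rw [h, ← mul_assoc, ← mul_pow, ENNReal.inv_mul_cancel (by norm_num) (by norm_num), one_pow,
      one_mul]
  · simp [restr, h]

lemma restr_l1 (f : ℤ×ℤ → ℝ≥0∞) (i : ℕ) :
    ∑' k : ℤ×ℤ, restr i f k ≤ 2^(i+3) * (q^i * (Fi f i) ^ ((1:ℝ)/2)) := by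
  have h1 : ∀ k : ℤ×ℤ, restr i f k = (if lev k = i then (1:ℝ≥0∞) else 0) * restr i f k := by
    intro k; by_cases h : lev k = i <;> simp [restr, h]
  have h2 : ∀ k : ℤ×ℤ, ((if lev k = i then (1:ℝ≥0∞) else 0)) ^ (2:ℕ)
      = (if lev k = i then (1:ℝ≥0∞) else 0) := by
    intro k; split <;> simp
  calc ∑' k : ℤ×ℤ, restr i f k
      = ∑' k : ℤ×ℤ, (if lev k = i then (1:ℝ≥0∞) else 0) * restr i f k := tsum_congr h1
    _ ≤ (∑' k : ℤ×ℤ, ((if lev k = i then (1:ℝ≥0∞) else 0)) ^ (2:ℕ)) ^ ((1:ℝ)/2)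
        * (∑' k : ℤ×ℤ, restr i f k ^ (2:ℕ)) ^ ((1:ℝ)/2) := cs_tsum _ _
    _ ≤ ((2:ℝ≥0∞) ^ (2*i+6)) ^ ((1:ℝ)/2) * (((2:ℝ≥0∞)⁻¹)^i * Fi f i) ^ ((1:ℝ)/2) := by
        gcongr
        · rw [tsum_congr h2]; exact tsum_ind_lev_le i
        · rw [restr_l2]
    _ = 2^(i+3) * (q^i * (Fi f i) ^ ((1:ℝ)/2)) := by
        rw [show (2*i+6) = (i+3)*2 by ring, pow_mul, sq_rpow_half, mul_rpow_half,
          pow_rpow_half]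
        rfl

lemma pair_le {i j : ℕ} (hij : i ≤ j) (f g h : ℤ×ℤ → ℝ≥0∞) :
    ∑' km : (ℤ×ℤ)×(ℤ×ℤ), restr i f km.1 * restr j g (km.2 - km.1) * h km.2
      ≤ 8 * q^(j-i) * (Fi f i) ^ ((1:ℝ)/2) * (Fi g j) ^ ((1:ℝ)/2)
        * (∑' k, h k ^ (2:ℕ)) ^ ((1:ℝ)/2) := by
  calc ∑' km : (ℤ×ℤ)×(ℤ×ℤ), restr i f km.1 * restr j g (km.2 - km.1) * h km.2
      ≤ (∑' k, restr i f k) * (∑' k, restr j g k ^ (2:ℕ)) ^ ((1:ℝ)/2)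
        * (∑' k, h k ^ (2:ℕ)) ^ ((1:ℝ)/2) := conv_basic _ _ _
    _ ≤ (2^(i+3) * (q^i * (Fi f i) ^ ((1:ℝ)/2))) * (((2:ℝ≥0∞)⁻¹^j * Fi g j) ^ ((1:ℝ)/2))
        * (∑' k, h k ^ (2:ℕ)) ^ ((1:ℝ)/2) := by
        gcongr
        · exact restr_l1 f i
        · rw [restr_l2]
    _ = 8 * q^(j-i) * (Fi f i) ^ ((1:ℝ)/2) * (Fi g j) ^ ((1:ℝ)/2)
        * (∑' k, h k ^ (2:ℕ)) ^ ((1:ℝ)/2) := by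
        rw [mul_rpow_half, pow_rpow_half]
        have e1 : ((2:ℝ≥0∞)⁻¹ ^ ((1:ℝ)/2)) = q := rfl
        rw [e1]
        have key : ∀ X Y Z : ℝ≥0∞, (2:ℝ≥0∞)^(i+3) * (q^i * X) * (q^j * Y) * Z
            = (8 * ((2:ℝ≥0∞)^i * (q^i * q^j))) * X * Y * Z := by
          intro X Y Z; rw [pow_add]; ring
        rw [key, two_pow_q_pow hij]

def eSwap : (ℤ×ℤ)×(ℤ×ℤ) ≃ (ℤ×ℤ)×(ℤ×ℤ) :=
  ⟨fun p => (p.2 - p.1, p.2), fun p => (p.2 - p.1, p.2),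
   fun p => by simp [sub_sub_cancel], fun p => by simp [sub_sub_cancel]⟩

lemma swap_sum (u v w : ℤ×ℤ → ℝ≥0∞) :
    ∑' km : (ℤ×ℤ)×(ℤ×ℤ), u km.1 * v (km.2 - km.1) * w km.2
      = ∑' km : (ℤ×ℤ)×(ℤ×ℤ), v km.1 * u (km.2 - km.1) * w km.2 := by
  have h := Equiv.tsum_eq eSwap (fun km : (ℤ×ℤ)×(ℤ×ℤ) => v km.1 * u (km.2 - km.1) * w km.2)
  rw [← h]
  refine tsum_congr fun p => ?_
  have he : eSwap p = (p.2 - p.1, p.2) := rfl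
  rw [he]
  simp only [sub_sub_cancel]
  ring

lemma pair_le' (i j : ℕ) (f g h : ℤ×ℤ → ℝ≥0∞) :
    ∑' km : (ℤ×ℤ)×(ℤ×ℤ), restr i f km.1 * restr j g (km.2 - km.1) * h km.2
      ≤ 8 * ((if i ≤ j then q^(j-i) else 0) + (if j ≤ i then q^(i-j) else 0))
        * (Fi f i) ^ ((1:ℝ)/2) * (Fi g j) ^ ((1:ℝ)/2) * (∑' k, h k ^ (2:ℕ)) ^ ((1:ℝ)/2) := by
  by_cases hij : i ≤ j
  · refine le_trans (pair_le hij f g h) ?_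
    gcongr
    rw [if_pos hij]
    exact le_add_right (le_refl _)
  · have hji : j ≤ i := by omega
    rw [swap_sum]
    refine le_trans (pair_le hji g f h) ?_
    have e : 8 * q^(i-j) * (Fi g j) ^ ((1:ℝ)/2) * (Fi f i) ^ ((1:ℝ)/2)
        * (∑' k, h k ^ (2:ℕ)) ^ ((1:ℝ)/2)
        = 8 * q^(i-j) * (Fi f i) ^ ((1:ℝ)/2) * (Fi g j) ^ ((1:ℝ)/2)
        * (∑' k, h k ^ (2:ℕ)) ^ ((1:ℝ)/2) := by ring
    rw [e]
    gcongr
    rw [if_pos hji]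
    exact le_add_left (le_refl _)

lemma restr_ne (f : ℤ×ℤ → ℝ≥0∞) (k : ℤ×ℤ) {i : ℕ} (hi : i ≠ lev k) : restr i f k = 0 := by
  simp only [restr]; exact if_neg fun h => hi h.symm

lemma sum_restr (f : ℤ×ℤ → ℝ≥0∞) (k : ℤ×ℤ) : ∑' i : ℕ, restr i f k = f k := by
  rw [tsum_eq_single (lev k) (fun i hi => restr_ne f k hi)]
  simp [restr]

lemma sum_Fi (f : ℤ×ℤ → ℝ≥0∞) :
    ∑' i : ℕ, Fi f i = ∑' k : ℤ×ℤ, (2:ℝ≥0∞)^(lev k) * f k ^ (2:ℕ) := by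
  simp only [Fi]
  rw [ENNReal.tsum_comm]
  refine tsum_congr fun k => ?_
  rw [tsum_eq_single (lev k) (fun i hi => by rw [restr_ne f k hi]; simp)]
  simp [restr]

lemma decomp (f g h : ℤ×ℤ → ℝ≥0∞) :
    ∑' km : (ℤ×ℤ)×(ℤ×ℤ), f km.1 * g (km.2 - km.1) * h km.2
      = ∑' ij : ℕ×ℕ, ∑' km : (ℤ×ℤ)×(ℤ×ℤ),
          restr ij.1 f km.1 * restr ij.2 g (km.2 - km.1) * h km.2 := by
  rw [ENNReal.tsum_comm (f := fun (ij : ℕ×ℕ) (km : (ℤ×ℤ)×(ℤ×ℤ)) =>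
    restr ij.1 f km.1 * restr ij.2 g (km.2 - km.1) * h km.2)]
  refine tsum_congr fun km => ?_
  calc f km.1 * g (km.2 - km.1) * h km.2
      = ((∑' i : ℕ, restr i f km.1) * (∑' j : ℕ, restr j g (km.2 - km.1))) * h km.2 := by
        rw [sum_restr, sum_restr]
    _ = (∑' ij : ℕ×ℕ, restr ij.1 f km.1 * restr ij.2 g (km.2 - km.1)) * h km.2 := by
        congr 1
        rw [ENNReal.tsum_prod']
        have hin : ∀ a : ℕ, ∑' b : ℕ, restr (a,b).1 f km.1 * restr (a,b).2 g (km.2 - km.1)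
            = restr a f km.1 * ∑' b : ℕ, restr b g (km.2 - km.1) := by
          intro a
          have hb : ∀ b : ℕ, restr (a,b).1 f km.1 * restr (a,b).2 g (km.2 - km.1)
              = restr a f km.1 * restr b g (km.2 - km.1) := fun b => rfl
          rw [tsum_congr hb, ENNReal.tsum_mul_left]
        rw [tsum_congr hin, ENNReal.tsum_mul_right]
    _ = ∑' ij : ℕ×ℕ, restr ij.1 f km.1 * restr ij.2 g (km.2 - km.1) * h km.2 := by
        rw [ENNReal.tsum_mul_right]

theorem conv_2d (f g h : ℤ×ℤ → ℝ≥0∞) :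
    ∑' km : (ℤ×ℤ)×(ℤ×ℤ), f km.1 * g (km.2 - km.1) * h km.2
      ≤ 64 * (∑' k : ℤ×ℤ, (2:ℝ≥0∞)^(lev k) * f k ^ (2:ℕ)) ^ ((1:ℝ)/2)
          * (∑' k : ℤ×ℤ, (2:ℝ≥0∞)^(lev k) * g k ^ (2:ℕ)) ^ ((1:ℝ)/2)
          * (∑' k, h k ^ (2:ℕ)) ^ ((1:ℝ)/2) := by
  set X : ℕ → ℝ≥0∞ := fun i => (Fi f i) ^ ((1:ℝ)/2) with hX
  set Y : ℕ → ℝ≥0∞ := fun j => (Fi g j) ^ ((1:ℝ)/2) with hY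
  set H : ℝ≥0∞ := (∑' k, h k ^ (2:ℕ)) ^ ((1:ℝ)/2) with hH
  rw [decomp]
  have step1 : ∑' ij : ℕ×ℕ, ∑' km : (ℤ×ℤ)×(ℤ×ℤ),
      restr ij.1 f km.1 * restr ij.2 g (km.2 - km.1) * h km.2
      ≤ ∑' ij : ℕ×ℕ, (8 * H) * (((if ij.1 ≤ ij.2 then q^(ij.2-ij.1) else 0) * X ij.1 * Y ij.2)
          + ((if ij.2 ≤ ij.1 then q^(ij.1-ij.2) else 0) * X ij.1 * Y ij.2)) := by
    refine ENNReal.tsum_le_tsum fun ij => ?_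
    refine le_trans (pair_le' ij.1 ij.2 f g h) (le_of_eq ?_)
    rw [hX, hY, hH]
    ring
  refine le_trans step1 ?_
  rw [ENNReal.tsum_mul_left]
  have split : ∑' ij : ℕ×ℕ, (((if ij.1 ≤ ij.2 then q^(ij.2-ij.1) else 0) * X ij.1 * Y ij.2)
      + ((if ij.2 ≤ ij.1 then q^(ij.1-ij.2) else 0) * X ij.1 * Y ij.2))
      = (∑' ij : ℕ×ℕ, (if ij.1 ≤ ij.2 then q^(ij.2-ij.1) else 0) * X ij.1 * Y ij.2)
      + (∑' ij : ℕ×ℕ, (if ij.2 ≤ ij.1 then q^(ij.1-ij.2) else 0) * X ij.1 * Y ij.2) :=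
    ENNReal.tsum_add
  rw [split]
  have b1 : ∑' ij : ℕ×ℕ, (if ij.1 ≤ ij.2 then q^(ij.2-ij.1) else 0) * X ij.1 * Y ij.2
      ≤ 4 * ((∑' i, X i ^ (2:ℕ)) ^ ((1:ℝ)/2)) * ((∑' j, Y j ^ (2:ℕ)) ^ ((1:ℝ)/2)) := schur X Y
  have b2 : ∑' ij : ℕ×ℕ, (if ij.2 ≤ ij.1 then q^(ij.1-ij.2) else 0) * X ij.1 * Y ij.2
      ≤ 4 * ((∑' i, X i ^ (2:ℕ)) ^ ((1:ℝ)/2)) * ((∑' j, Y j ^ (2:ℕ)) ^ ((1:ℝ)/2)) := by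
    have hswap := Equiv.tsum_eq (Equiv.prodComm ℕ ℕ)
      (fun ij : ℕ×ℕ => (if ij.1 ≤ ij.2 then q^(ij.2-ij.1) else 0) * Y ij.1 * X ij.2)
    have : ∑' ij : ℕ×ℕ, (if ij.2 ≤ ij.1 then q^(ij.1-ij.2) else 0) * X ij.1 * Y ij.2
        = ∑' ij : ℕ×ℕ, (if ij.1 ≤ ij.2 then q^(ij.2-ij.1) else 0) * Y ij.1 * X ij.2 := by
      rw [← hswap]
      exact tsum_congr fun ij => by simp only [Equiv.prodComm_apply, Prod.swap]; rw [mul_assoc, mul_assoc, mul_comm (Y _) (X _)]; congr 1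
    rw [this]
    refine le_trans (schur Y X) (le_of_eq ?_)
    ring
  have hXF : ∑' i, X i ^ (2:ℕ) = ∑' k : ℤ×ℤ, (2:ℝ≥0∞)^(lev k) * f k ^ (2:ℕ) := by
    rw [← sum_Fi]; exact tsum_congr fun i => rpow_half_sq _
  have hYF : ∑' j, Y j ^ (2:ℕ) = ∑' k : ℤ×ℤ, (2:ℝ≥0∞)^(lev k) * g k ^ (2:ℕ) := by
    rw [← sum_Fi]; exact tsum_congr fun j => rpow_half_sq _
  calc (8 * H) * ((∑' ij : ℕ×ℕ, (if ij.1 ≤ ij.2 then q^(ij.2-ij.1) else 0) * X ij.1 * Y ij.2)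
      + (∑' ij : ℕ×ℕ, (if ij.2 ≤ ij.1 then q^(ij.1-ij.2) else 0) * X ij.1 * Y ij.2))
      ≤ (8 * H) * ((4 * ((∑' i, X i ^ (2:ℕ)) ^ ((1:ℝ)/2)) * ((∑' j, Y j ^ (2:ℕ)) ^ ((1:ℝ)/2)))
        + (4 * ((∑' i, X i ^ (2:ℕ)) ^ ((1:ℝ)/2)) * ((∑' j, Y j ^ (2:ℕ)) ^ ((1:ℝ)/2)))) := by
        gcongr
    _ = 64 * ((∑' i, X i ^ (2:ℕ)) ^ ((1:ℝ)/2)) * ((∑' j, Y j ^ (2:ℕ)) ^ ((1:ℝ)/2)) * H := by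
        ring
    _ = 64 * (∑' k : ℤ×ℤ, (2:ℝ≥0∞)^(lev k) * f k ^ (2:ℕ)) ^ ((1:ℝ)/2)
          * (∑' k : ℤ×ℤ, (2:ℝ≥0∞)^(lev k) * g k ^ (2:ℕ)) ^ ((1:ℝ)/2)
          * H := by rw [hXF, hYF]

lemma finset_cs (J : Finset ℤ) (hJ : J.card ≤ 8) (u : ℤ → ℝ≥0∞) :
    ∑ z ∈ J, u z ≤ (8:ℝ≥0∞) ^ ((1:ℝ)/2) * (∑' z : ℤ, u z ^ (2:ℕ)) ^ ((1:ℝ)/2) := by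
  classical
  have h1 : ∑ z ∈ J, u z = ∑' z : ℤ, (if z ∈ J then (1:ℝ≥0∞) else 0) * u z := by
    rw [tsum_eq_sum (s := J) (fun z hz => by rw [if_neg hz, zero_mul])]
    exact Finset.sum_congr rfl fun z hz => by rw [if_pos hz, one_mul]
  rw [h1]
  refine le_trans (cs_tsum _ _) ?_
  gcongr
  · calc ∑' z : ℤ, (if z ∈ J then (1:ℝ≥0∞) else 0) ^ (2:ℕ)
        = ∑' z : ℤ, (if z ∈ J then (1:ℝ≥0∞) else 0) := by
          refine tsum_congr fun z => ?_; split <;> simp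
      _ = ∑ z ∈ J, (if z ∈ J then (1:ℝ≥0∞) else 0) :=
          tsum_eq_sum (fun z hz => if_neg hz)
      _ = (J.card : ℝ≥0∞) := by
          rw [Finset.sum_congr rfl fun z hz => if_pos hz]; simp
      _ ≤ 8 := by exact_mod_cast Nat.cast_le.mpr hJ

noncomputable def W (n : ℤ × ℤ × ℤ) : ℝ≥0∞ :=
  ENNReal.ofReal ((1 + freqSq n) ^ ((1:ℝ)/2))

lemma lev_le_W (n : ℤ × ℤ × ℤ) : (2:ℝ≥0∞) ^ (lev (n.1, n.2.1)) ≤ 4 * W n := by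
  have hfs : 0 ≤ freqSq n := by
    simp only [freqSq]; positivity
  have hreal : (2:ℝ) ^ (lev (n.1, n.2.1)) ≤ 4 * ((1 + freqSq n) ^ ((1:ℝ)/2)) := by
    have h0 : ((2:ℝ) ^ (lev (n.1, n.2.1))) ≤ 2 + |(n.1:ℝ)| + |(n.2.1:ℝ)| := by
      have := two_pow_lev_le (n.1, n.2.1)
      have hcast : ((2 ^ lev (n.1, n.2.1) : ℕ) : ℝ) ≤ ((2 + n.1.natAbs + n.2.1.natAbs : ℕ) : ℝ) :=
        Nat.cast_le.mpr this
      push_cast at hcast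
      rw [Nat.cast_natAbs, Nat.cast_natAbs] at hcast
      convert hcast using 2 <;> push_cast <;> ring
    have h1 : (1 + freqSq n) ^ ((1:ℝ)/2) = Real.sqrt (1 + freqSq n) := by
      rw [Real.sqrt_eq_rpow]
    rw [h1]
    have h2 : 2 + |(n.1:ℝ)| + |(n.2.1:ℝ)| ≤ 4 * Real.sqrt (1 + freqSq n) := by
      have hq : ((2 + |(n.1:ℝ)| + |(n.2.1:ℝ)|)/4) ≤ Real.sqrt (1 + freqSq n) := by
        rw [Real.le_sqrt (by positivity) (by positivity)]
        simp only [freqSq]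
        nlinarith [sq_abs (n.1:ℝ), sq_abs (n.2.1:ℝ), sq_nonneg ((n.2.2:ℝ)),
          sq_nonneg (|(n.1:ℝ)| - 2), sq_nonneg (|(n.2.1:ℝ)| - 2),
          sq_nonneg (|(n.1:ℝ)| - |(n.2.1:ℝ)|), abs_nonneg (n.1:ℝ), abs_nonneg (n.2.1:ℝ)]
      linarith
    linarith
  calc (2:ℝ≥0∞) ^ (lev (n.1, n.2.1)) = ENNReal.ofReal ((2:ℝ) ^ (lev (n.1, n.2.1))) := by
        rw [ENNReal.ofReal_pow (by norm_num)]
        norm_num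
    _ ≤ ENNReal.ofReal (4 * ((1 + freqSq n) ^ ((1:ℝ)/2))) := ENNReal.ofReal_le_ofReal hreal
    _ = 4 * W n := by
        rw [ENNReal.ofReal_mul (by norm_num), W]
        norm_num

def eP : (((ℤ×ℤ)×(ℤ×ℤ))×ℤ) ≃ (ℤ×ℤ)×(ℤ×ℤ×ℤ) :=
  ⟨fun p => (p.1.1, (p.1.2.1, p.1.2.2, p.2)),
   fun p => ((p.1, (p.2.1, p.2.2.1)), p.2.2.2),
   fun p => rfl, fun p => rfl⟩

lemma eight_rpow_le : (8:ℝ≥0∞) ^ ((1:ℝ)/2) ≤ 3 := by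
  calc (8:ℝ≥0∞) ^ ((1:ℝ)/2) ≤ (9:ℝ≥0∞) ^ ((1:ℝ)/2) := rpow_half_mono (by norm_num)
    _ = 3 := by rw [show (9:ℝ≥0∞) = 3^(2:ℕ) by norm_num, sq_rpow_half]

theorem main_ennreal (α β γ : ℤ×ℤ×ℤ → ℝ≥0∞) (J : (ℤ×ℤ)×(ℤ×ℤ×ℤ) → Finset ℤ)
    (hJ : ∀ p, (J p).card ≤ 8) :
    ∑' p : (ℤ×ℤ)×(ℤ×ℤ×ℤ),
        ∑ z ∈ J p, α (p.1.1, p.1.2, z) * β (p.2 - (p.1.1, p.1.2, z)) * γ p.2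
      ≤ 768 * (∑' n : ℤ×ℤ×ℤ, W n * α n ^ (2:ℕ)) ^ ((1:ℝ)/2)
          * (∑' n : ℤ×ℤ×ℤ, W n * β n ^ (2:ℕ)) ^ ((1:ℝ)/2)
          * (∑' n : ℤ×ℤ×ℤ, γ n ^ (2:ℕ)) ^ ((1:ℝ)/2) := by
  classical
  set A : ℤ×ℤ → ℝ≥0∞ := fun k => ∑' z : ℤ, α (k.1, k.2, z) ^ (2:ℕ) with hA
  set B : ℤ×ℤ → ℝ≥0∞ := fun k => ∑' z : ℤ, β (k.1, k.2, z) ^ (2:ℕ) with hB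
  set C : ℤ×ℤ → ℝ≥0∞ := fun k => ∑' z : ℤ, γ (k.1, k.2, z) ^ (2:ℕ) with hC
  set Φ : (ℤ×ℤ)×(ℤ×ℤ×ℤ) → ℝ≥0∞ :=
    fun p => ∑' w : ℤ, α (p.1.1, p.1.2, w) ^ (2:ℕ) * β (p.2 - (p.1.1, p.1.2, w)) ^ (2:ℕ) with hΦ
  -- Step 1: fiber Cauchy-Schwarz
  have step1 : ∀ p : (ℤ×ℤ)×(ℤ×ℤ×ℤ),
      ∑ z ∈ J p, α (p.1.1, p.1.2, z) * β (p.2 - (p.1.1, p.1.2, z)) * γ p.2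
        ≤ (8:ℝ≥0∞) ^ ((1:ℝ)/2) * ((Φ p) ^ ((1:ℝ)/2) * γ p.2) := by
    intro p
    have h1 : ∑ z ∈ J p, α (p.1.1, p.1.2, z) * β (p.2 - (p.1.1, p.1.2, z)) * γ p.2
        = (∑ z ∈ J p, α (p.1.1, p.1.2, z) * β (p.2 - (p.1.1, p.1.2, z))) * γ p.2 := by
      rw [Finset.sum_mul]
    rw [h1]
    have h2 := finset_cs (J p) (hJ p) (fun z => α (p.1.1, p.1.2, z) * β (p.2 - (p.1.1, p.1.2, z)))
    have h3 : (∑' z : ℤ, (α (p.1.1, p.1.2, z) * β (p.2 - (p.1.1, p.1.2, z))) ^ (2:ℕ)) = Φ p := by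
      exact tsum_congr fun z => by rw [mul_pow]
    rw [h3] at h2
    calc (∑ z ∈ J p, α (p.1.1, p.1.2, z) * β (p.2 - (p.1.1, p.1.2, z))) * γ p.2
        ≤ ((8:ℝ≥0∞) ^ ((1:ℝ)/2) * (Φ p) ^ ((1:ℝ)/2)) * γ p.2 := mul_le_mul_left h2 _
      _ = (8:ℝ≥0∞) ^ ((1:ℝ)/2) * ((Φ p) ^ ((1:ℝ)/2) * γ p.2) := by ring
  -- Step 4: vertical Fubini identity
  have step4 : ∀ km : (ℤ×ℤ)×(ℤ×ℤ), ∑' z : ℤ, Φ (km.1, (km.2.1, km.2.2, z))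
      = A km.1 * B (km.2 - km.1) := by
    rintro ⟨k, m⟩
    simp only [hΦ]
    have harg : ∀ z w : ℤ, ((m.1, m.2, z) : ℤ×ℤ×ℤ) - (k.1, k.2, w)
        = (m.1 - k.1, m.2 - k.2, z - w) := fun z w => rfl
    calc ∑' z : ℤ, ∑' w : ℤ, α (k.1, k.2, w) ^ (2:ℕ)
          * β (((m.1, m.2, z) : ℤ×ℤ×ℤ) - (k.1, k.2, w)) ^ (2:ℕ)
        = ∑' w : ℤ, ∑' z : ℤ, α (k.1, k.2, w) ^ (2:ℕ)
          * β ((m.1 - k.1, m.2 - k.2, z - w) : ℤ×ℤ×ℤ) ^ (2:ℕ) := by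
          rw [ENNReal.tsum_comm]
          exact tsum_congr fun w => tsum_congr fun z => by rw [harg]
      _ = ∑' w : ℤ, α (k.1, k.2, w) ^ (2:ℕ)
          * ∑' z : ℤ, β ((m.1 - k.1, m.2 - k.2, z) : ℤ×ℤ×ℤ) ^ (2:ℕ) := by
          refine tsum_congr fun w => ?_
          rw [ENNReal.tsum_mul_left]
          congr 1
          exact Equiv.tsum_eq (Equiv.subRight w)
            (fun z => β ((m.1 - k.1, m.2 - k.2, z) : ℤ×ℤ×ℤ) ^ (2:ℕ))
      _ = A k * B (m - k) := by
          rw [ENNReal.tsum_mul_right]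
          rfl
  -- Assemble steps 2,3,5
  have step5 : ∑' p : (ℤ×ℤ)×(ℤ×ℤ×ℤ), (Φ p) ^ ((1:ℝ)/2) * γ p.2
      ≤ ∑' km : (ℤ×ℤ)×(ℤ×ℤ), (A km.1) ^ ((1:ℝ)/2) * (B (km.2 - km.1)) ^ ((1:ℝ)/2)
          * (C km.2) ^ ((1:ℝ)/2) := by
    have e1 : ∑' p : (ℤ×ℤ)×(ℤ×ℤ×ℤ), (Φ p) ^ ((1:ℝ)/2) * γ p.2
        = ∑' km : (ℤ×ℤ)×(ℤ×ℤ), ∑' z : ℤ,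
            (Φ (km.1, (km.2.1, km.2.2, z))) ^ ((1:ℝ)/2) * γ (km.2.1, km.2.2, z) := by
      rw [← Equiv.tsum_eq eP (fun p => (Φ p) ^ ((1:ℝ)/2) * γ p.2), ENNReal.tsum_prod']
      rfl
    rw [e1]
    refine ENNReal.tsum_le_tsum fun km => ?_
    have hcs := cs_tsum (fun z : ℤ => (Φ (km.1, (km.2.1, km.2.2, z))) ^ ((1:ℝ)/2))
      (fun z : ℤ => γ (km.2.1, km.2.2, z))
    refine le_trans hcs (le_of_eq ?_)
    have e2 : (∑' z : ℤ, ((Φ (km.1, (km.2.1, km.2.2, z))) ^ ((1:ℝ)/2)) ^ (2:ℕ))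
        = A km.1 * B (km.2 - km.1) := by
      rw [tsum_congr fun z => rpow_half_sq (Φ (km.1, (km.2.1, km.2.2, z)))]
      exact step4 km
    rw [e2, mul_rpow_half]
  -- weighted sums
  have wA : ∑' k : ℤ×ℤ, (2:ℝ≥0∞)^(lev k) * ((A k) ^ ((1:ℝ)/2)) ^ (2:ℕ)
      ≤ 4 * ∑' n : ℤ×ℤ×ℤ, W n * α n ^ (2:ℕ) := by
    have e4 : ∀ k : ℤ×ℤ, (2:ℝ≥0∞)^(lev k) * ((A k) ^ ((1:ℝ)/2)) ^ (2:ℕ)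
        = ∑' z : ℤ, (2:ℝ≥0∞)^(lev k) * α (k.1, k.2, z) ^ (2:ℕ) := by
      intro k; rw [rpow_half_sq, hA, ENNReal.tsum_mul_left]
    rw [tsum_congr e4]
    have e5 : ∑' n : ℤ×ℤ×ℤ, W n * α n ^ (2:ℕ)
        = ∑' k : ℤ×ℤ, ∑' z : ℤ, W (k.1, k.2, z) * α (k.1, k.2, z) ^ (2:ℕ) := by
      rw [← Equiv.tsum_eq (Equiv.prodAssoc ℤ ℤ ℤ) (fun n => W n * α n ^ (2:ℕ)),
        ENNReal.tsum_prod']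
      rfl
    rw [e5, ← ENNReal.tsum_mul_left]
    refine ENNReal.tsum_le_tsum fun k => ?_
    rw [← ENNReal.tsum_mul_left]
    refine ENNReal.tsum_le_tsum fun z => ?_
    rw [← mul_assoc]
    refine mul_le_mul_left ?_ _
    exact lev_le_W (k.1, k.2, z)
  have wB : ∑' k : ℤ×ℤ, (2:ℝ≥0∞)^(lev k) * ((B k) ^ ((1:ℝ)/2)) ^ (2:ℕ)
      ≤ 4 * ∑' n : ℤ×ℤ×ℤ, W n * β n ^ (2:ℕ) := by
    have e4 : ∀ k : ℤ×ℤ, (2:ℝ≥0∞)^(lev k) * ((B k) ^ ((1:ℝ)/2)) ^ (2:ℕ)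
        = ∑' z : ℤ, (2:ℝ≥0∞)^(lev k) * β (k.1, k.2, z) ^ (2:ℕ) := by
      intro k; rw [rpow_half_sq, hB, ENNReal.tsum_mul_left]
    rw [tsum_congr e4]
    have e5 : ∑' n : ℤ×ℤ×ℤ, W n * β n ^ (2:ℕ)
        = ∑' k : ℤ×ℤ, ∑' z : ℤ, W (k.1, k.2, z) * β (k.1, k.2, z) ^ (2:ℕ) := by
      rw [← Equiv.tsum_eq (Equiv.prodAssoc ℤ ℤ ℤ) (fun n => W n * β n ^ (2:ℕ)),
        ENNReal.tsum_prod']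
      rfl
    rw [e5, ← ENNReal.tsum_mul_left]
    refine ENNReal.tsum_le_tsum fun k => ?_
    rw [← ENNReal.tsum_mul_left]
    refine ENNReal.tsum_le_tsum fun z => ?_
    rw [← mul_assoc]
    exact mul_le_mul_left (lev_le_W (k.1, k.2, z)) _
  have wC : ∑' k : ℤ×ℤ, ((C k) ^ ((1:ℝ)/2)) ^ (2:ℕ) = ∑' n : ℤ×ℤ×ℤ, γ n ^ (2:ℕ) := by
    rw [tsum_congr fun k => rpow_half_sq (C k)]
    have h1 : ∑' c : (ℤ×ℤ)×ℤ, γ ((Equiv.prodAssoc ℤ ℤ ℤ) c) ^ (2:ℕ)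
        = ∑' n : ℤ×ℤ×ℤ, γ n ^ (2:ℕ) :=
      Equiv.tsum_eq (Equiv.prodAssoc ℤ ℤ ℤ) (fun n => γ n ^ (2:ℕ))
    have h2 : ∑' c : (ℤ×ℤ)×ℤ, γ ((Equiv.prodAssoc ℤ ℤ ℤ) c) ^ (2:ℕ)
        = ∑' a : ℤ×ℤ, ∑' b : ℤ, γ ((Equiv.prodAssoc ℤ ℤ ℤ) (a, b)) ^ (2:ℕ) :=
      ENNReal.tsum_prod'
    rw [← h1, h2]
    rfl
  -- final assembly
  calc ∑' p : (ℤ×ℤ)×(ℤ×ℤ×ℤ),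
        ∑ z ∈ J p, α (p.1.1, p.1.2, z) * β (p.2 - (p.1.1, p.1.2, z)) * γ p.2
      ≤ ∑' p : (ℤ×ℤ)×(ℤ×ℤ×ℤ), (8:ℝ≥0∞) ^ ((1:ℝ)/2) * ((Φ p) ^ ((1:ℝ)/2) * γ p.2) :=
        ENNReal.tsum_le_tsum step1
    _ = (8:ℝ≥0∞) ^ ((1:ℝ)/2) * ∑' p : (ℤ×ℤ)×(ℤ×ℤ×ℤ), (Φ p) ^ ((1:ℝ)/2) * γ p.2 :=
        ENNReal.tsum_mul_left
    _ ≤ (8:ℝ≥0∞) ^ ((1:ℝ)/2) * ∑' km : (ℤ×ℤ)×(ℤ×ℤ),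
          (A km.1) ^ ((1:ℝ)/2) * (B (km.2 - km.1)) ^ ((1:ℝ)/2) * (C km.2) ^ ((1:ℝ)/2) :=
        mul_le_mul_right step5 _
    _ ≤ (8:ℝ≥0∞) ^ ((1:ℝ)/2) * (64
          * (∑' k : ℤ×ℤ, (2:ℝ≥0∞)^(lev k) * ((A k) ^ ((1:ℝ)/2)) ^ (2:ℕ)) ^ ((1:ℝ)/2)
          * (∑' k : ℤ×ℤ, (2:ℝ≥0∞)^(lev k) * ((B k) ^ ((1:ℝ)/2)) ^ (2:ℕ)) ^ ((1:ℝ)/2)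
          * (∑' k : ℤ×ℤ, ((C k) ^ ((1:ℝ)/2)) ^ (2:ℕ)) ^ ((1:ℝ)/2)) :=
        mul_le_mul_right (conv_2d (fun k => (A k) ^ ((1:ℝ)/2)) (fun k => (B k) ^ ((1:ℝ)/2))
          (fun k => (C k) ^ ((1:ℝ)/2))) _
    _ ≤ 3 * (64 * (4 * ∑' n : ℤ×ℤ×ℤ, W n * α n ^ (2:ℕ)) ^ ((1:ℝ)/2)
          * (4 * ∑' n : ℤ×ℤ×ℤ, W n * β n ^ (2:ℕ)) ^ ((1:ℝ)/2)
          * (∑' n : ℤ×ℤ×ℤ, γ n ^ (2:ℕ)) ^ ((1:ℝ)/2)) := by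
        rw [wC]
        refine mul_le_mul' eight_rpow_le ?_
        exact mul_le_mul' (mul_le_mul' (mul_le_mul' le_rfl (rpow_half_mono wA))
          (rpow_half_mono wB)) le_rfl
    _ = 768 * (∑' n : ℤ×ℤ×ℤ, W n * α n ^ (2:ℕ)) ^ ((1:ℝ)/2)
          * (∑' n : ℤ×ℤ×ℤ, W n * β n ^ (2:ℕ)) ^ ((1:ℝ)/2)
          * (∑' n : ℤ×ℤ×ℤ, γ n ^ (2:ℕ)) ^ ((1:ℝ)/2) := by
        rw [mul_rpow_half 4, mul_rpow_half 4, four_rpow_half]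
        ring

lemma freqSq_nonneg (n : ℤ×ℤ×ℤ) : 0 ≤ freqSq n := by
  simp only [freqSq]; positivity

lemma weight_le (n : ℤ×ℤ×ℤ) : (1 + freqSq n) ^ ((1:ℝ)/2) ≤ 1 + Real.sqrt (freqSq n) := by
  have hs := freqSq_nonneg n
  have ht : Real.sqrt (freqSq n) ^ 2 = freqSq n := Real.sq_sqrt hs
  have ht0 : 0 ≤ Real.sqrt (freqSq n) := Real.sqrt_nonneg _
  rw [← Real.sqrt_eq_rpow]
  have h1 : 1 + freqSq n ≤ (1 + Real.sqrt (freqSq n)) ^ 2 := by nlinarith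
  calc Real.sqrt (1 + freqSq n) ≤ Real.sqrt ((1 + Real.sqrt (freqSq n)) ^ 2) :=
      Real.sqrt_le_sqrt h1
    _ = 1 + Real.sqrt (freqSq n) := Real.sqrt_sq (by linarith)

end TriRes

open TriRes in
/-- trilinear resonant-sum estimate.  If `(a_n), (b_n), (c_n)` are
nonnegative families with `Σ (1+|n|)a_n² < ∞`, `Σ (1+|n|)b_n² < ∞`, `Σ c_n² < ∞`,
and every fiber `J(k_h, n) ⊆ ℤ` has at most `8` elements, then
`Σ_{(k_h,n)} Σ_{k₃ ∈ J(k_h,n)} a_{(k_h,k₃)} b_{n-(k_h,k₃)} c_n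
  ≤ C ‖a‖_{H^{1/2}} ‖b‖_{H^{1/2}} ‖c‖_{L²}` for a universal constant `C`. -/
theorem trilinear_resonant_estimate :
    ∃ C : ℝ, 0 < C ∧
      ∀ (a b c : ℤ × ℤ × ℤ → ℝ) (J : (ℤ × ℤ) × (ℤ × ℤ × ℤ) → Finset ℤ),
        (∀ n, 0 ≤ a n) → (∀ n, 0 ≤ b n) → (∀ n, 0 ≤ c n) →
        Summable (fun n : ℤ × ℤ × ℤ => (1 + Real.sqrt (freqSq n)) * a n ^ 2) →
        Summable (fun n : ℤ × ℤ × ℤ => (1 + Real.sqrt (freqSq n)) * b n ^ 2) →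
        Summable (fun n : ℤ × ℤ × ℤ => c n ^ 2) →
        (∀ p, (J p).card ≤ 8) →
        (∑' p : (ℤ × ℤ) × (ℤ × ℤ × ℤ),
            ∑ k₃ ∈ J p, a (p.1.1, p.1.2, k₃) * b (p.2 - (p.1.1, p.1.2, k₃)) * c p.2)
          ≤ C * Real.sqrt (∑' n : ℤ × ℤ × ℤ, (1 + freqSq n) ^ ((1 : ℝ) / 2) * a n ^ 2)
              * Real.sqrt (∑' n : ℤ × ℤ × ℤ, (1 + freqSq n) ^ ((1 : ℝ) / 2) * b n ^ 2)
              * Real.sqrt (∑' n : ℤ × ℤ × ℤ, c n ^ 2) := by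
  refine ⟨768, by norm_num, ?_⟩
  intro a b c J ha hb hc hsa hsb hsc hJ
  have hw : ∀ n : ℤ×ℤ×ℤ, 0 ≤ (1 + freqSq n) ^ ((1:ℝ)/2) :=
    fun n => Real.rpow_nonneg (by have := TriRes.freqSq_nonneg n; linarith) _
  -- summability of weighted squares
  have hwa : Summable (fun n : ℤ×ℤ×ℤ => (1 + freqSq n) ^ ((1:ℝ)/2) * a n ^ 2) := by
    refine Summable.of_nonneg_of_le (fun n => mul_nonneg (hw n) (sq_nonneg _)) (fun n => ?_) hsa
    exact mul_le_mul_of_nonneg_right (TriRes.weight_le n) (sq_nonneg _)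
  have hwb : Summable (fun n : ℤ×ℤ×ℤ => (1 + freqSq n) ^ ((1:ℝ)/2) * b n ^ 2) := by
    refine Summable.of_nonneg_of_le (fun n => mul_nonneg (hw n) (sq_nonneg _)) (fun n => ?_) hsb
    exact mul_le_mul_of_nonneg_right (TriRes.weight_le n) (sq_nonneg _)
  set RA : ℝ := ∑' n : ℤ×ℤ×ℤ, (1 + freqSq n) ^ ((1:ℝ)/2) * a n ^ 2 with hRA
  set RB : ℝ := ∑' n : ℤ×ℤ×ℤ, (1 + freqSq n) ^ ((1:ℝ)/2) * b n ^ 2 with hRB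
  set RC : ℝ := ∑' n : ℤ×ℤ×ℤ, c n ^ 2 with hRC
  set α : ℤ×ℤ×ℤ → ℝ≥0∞ := fun n => ENNReal.ofReal (a n) with hα
  set β : ℤ×ℤ×ℤ → ℝ≥0∞ := fun n => ENNReal.ofReal (b n) with hβ
  set γ : ℤ×ℤ×ℤ → ℝ≥0∞ := fun n => ENNReal.ofReal (c n) with hγ
  -- identify the ENNReal weighted sums
  have hAe : ∑' n : ℤ×ℤ×ℤ, W n * α n ^ (2:ℕ) = ENNReal.ofReal RA := by
    rw [hRA, ENNReal.ofReal_tsum_of_nonneg (fun n => mul_nonneg (hw n) (sq_nonneg _)) hwa]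
    refine tsum_congr fun n => ?_
    rw [ENNReal.ofReal_mul (hw n), hα, ← ENNReal.ofReal_pow (ha n)]
    rfl
  have hBe : ∑' n : ℤ×ℤ×ℤ, W n * β n ^ (2:ℕ) = ENNReal.ofReal RB := by
    rw [hRB, ENNReal.ofReal_tsum_of_nonneg (fun n => mul_nonneg (hw n) (sq_nonneg _)) hwb]
    refine tsum_congr fun n => ?_
    rw [ENNReal.ofReal_mul (hw n), hβ, ← ENNReal.ofReal_pow (hb n)]
    rfl
  have hCe : ∑' n : ℤ×ℤ×ℤ, γ n ^ (2:ℕ) = ENNReal.ofReal RC := by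
    rw [hRC, ENNReal.ofReal_tsum_of_nonneg (fun n => sq_nonneg _) hsc]
    exact tsum_congr fun n => by rw [hγ, ← ENNReal.ofReal_pow (hc n)]
  -- the ENNReal estimate
  have hmain := TriRes.main_ennreal α β γ J hJ
  rw [hAe, hBe, hCe] at hmain
  -- nonnegativity of terms
  have huterm : ∀ p : (ℤ×ℤ)×(ℤ×ℤ×ℤ),
      0 ≤ ∑ k₃ ∈ J p, a (p.1.1, p.1.2, k₃) * b (p.2 - (p.1.1, p.1.2, k₃)) * c p.2 :=
    fun p => Finset.sum_nonneg fun z _ => mul_nonneg (mul_nonneg (ha _) (hb _)) (hc _)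
  have hofu : ∀ p : (ℤ×ℤ)×(ℤ×ℤ×ℤ),
      ENNReal.ofReal (∑ k₃ ∈ J p, a (p.1.1, p.1.2, k₃) * b (p.2 - (p.1.1, p.1.2, k₃)) * c p.2)
        = ∑ z ∈ J p, α (p.1.1, p.1.2, z) * β (p.2 - (p.1.1, p.1.2, z)) * γ p.2 := by
    intro p
    rw [ENNReal.ofReal_sum_of_nonneg (fun z _ => mul_nonneg (mul_nonneg (ha _) (hb _)) (hc _))]
    refine Finset.sum_congr rfl fun z _ => ?_
    rw [ENNReal.ofReal_mul (mul_nonneg (ha _) (hb _)), ENNReal.ofReal_mul (ha _)]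
  have hS : ∑' p : (ℤ×ℤ)×(ℤ×ℤ×ℤ), ENNReal.ofReal
      (∑ k₃ ∈ J p, a (p.1.1, p.1.2, k₃) * b (p.2 - (p.1.1, p.1.2, k₃)) * c p.2)
      ≤ 768 * ENNReal.ofReal RA ^ ((1:ℝ)/2) * ENNReal.ofReal RB ^ ((1:ℝ)/2)
        * ENNReal.ofReal RC ^ ((1:ℝ)/2) := by
    rw [tsum_congr hofu]
    exact hmain
  have hfin : (768 : ℝ≥0∞) * ENNReal.ofReal RA ^ ((1:ℝ)/2) * ENNReal.ofReal RB ^ ((1:ℝ)/2)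
      * ENNReal.ofReal RC ^ ((1:ℝ)/2) ≠ ∞ := by
    refine ENNReal.mul_ne_top (ENNReal.mul_ne_top (ENNReal.mul_ne_top (by norm_num) ?_) ?_) ?_
      <;> exact ENNReal.rpow_ne_top_of_nonneg (by norm_num) ENNReal.ofReal_ne_top
  have hSne : ∑' p : (ℤ×ℤ)×(ℤ×ℤ×ℤ), ENNReal.ofReal
      (∑ k₃ ∈ J p, a (p.1.1, p.1.2, k₃) * b (p.2 - (p.1.1, p.1.2, k₃)) * c p.2) ≠ ∞ :=
    fun h => hfin (top_le_iff.mp (h ▸ hS))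
  -- convert to real
  have hLHS : (∑' p : (ℤ × ℤ) × (ℤ × ℤ × ℤ),
      ∑ k₃ ∈ J p, a (p.1.1, p.1.2, k₃) * b (p.2 - (p.1.1, p.1.2, k₃)) * c p.2)
      = (∑' p : (ℤ×ℤ)×(ℤ×ℤ×ℤ), ENNReal.ofReal
        (∑ k₃ ∈ J p, a (p.1.1, p.1.2, k₃) * b (p.2 - (p.1.1, p.1.2, k₃)) * c p.2)).toReal := by
    rw [ENNReal.tsum_toReal_eq (fun p => ENNReal.ofReal_ne_top)]
    exact tsum_congr fun p => (ENNReal.toReal_ofReal (huterm p)).symm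
  rw [hLHS]
  have hmono := ENNReal.toReal_mono hfin hS
  refine le_trans hmono (le_of_eq ?_)
  have hRA0 : 0 ≤ RA := tsum_nonneg fun n => mul_nonneg (hw n) (sq_nonneg _)
  have hRB0 : 0 ≤ RB := tsum_nonneg fun n => mul_nonneg (hw n) (sq_nonneg _)
  have hRC0 : 0 ≤ RC := tsum_nonneg fun n => sq_nonneg _
  rw [ENNReal.toReal_mul, ENNReal.toReal_mul, ENNReal.toReal_mul]
  rw [← ENNReal.toReal_rpow, ← ENNReal.toReal_rpow, ← ENNReal.toReal_rpow]
  rw [ENNReal.toReal_ofReal hRA0, ENNReal.toReal_ofReal hRB0, ENNReal.toReal_ofReal hRC0]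
  rw [Real.sqrt_eq_rpow, Real.sqrt_eq_rpow, Real.sqrt_eq_rpow]
  norm_num
end

section
/- Let s > 1/2. There is a constant C such that for any horizontal vector field u̲ = u̲(x₃) ∈ H^{s+1}(𝕋¹) and any vector field v ∈ H^{s+1}(𝕋³) with ∇_h v ∈ H^s(𝕋³), one has |⟨u̲·∇_h v, v⟩_{H^s(𝕋³)}| ≤ C (‖u̲‖_{H^s(𝕋¹)} + ‖u̲‖_{H^{s+1}(𝕋¹)}) ‖v‖_{H^s(𝕋³)} ‖∇_h v‖_{H^s(𝕋³)}. -/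
lemma my_summable_mul {ι : Type*} {f g : ι → ℝ} (hf : Summable fun i => f i ^ 2)
    (hg : Summable fun i => g i ^ 2) : Summable fun i => f i * g i := by
  refine Summable.of_abs (Summable.of_nonneg_of_le (fun i => abs_nonneg _)
    (fun i => ?_) (((hf.add hg).div_const 2)))
  rw [abs_mul]
  nlinarith [sq_nonneg (|f i| - |g i|), sq_abs (f i), sq_abs (g i)]

lemma my_tsum_mul_le {ι : Type*} {f g : ι → ℝ} (hf0 : ∀ i, 0 ≤ f i) (hg0 : ∀ i, 0 ≤ g i)
    (hf : Summable fun i => f i ^ 2) (hg : Summable fun i => g i ^ 2) :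
    ∑' i, f i * g i ≤ Real.sqrt (∑' i, f i ^ 2) * Real.sqrt (∑' i, g i ^ 2) := by
  refine Summable.tsum_le_of_sum_le (my_summable_mul hf hg) fun u => ?_
  have h1 : (∑ i ∈ u, f i * g i) ^ 2 ≤ (∑ i ∈ u, f i ^ 2) * ∑ i ∈ u, g i ^ 2 :=
    Finset.sum_mul_sq_le_sq_mul_sq u f g
  have h2 : ∑ i ∈ u, f i * g i ≤ Real.sqrt ((∑ i ∈ u, f i ^ 2) * ∑ i ∈ u, g i ^ 2) := by
    rw [← Real.sqrt_sq (Finset.sum_nonneg fun i _ => mul_nonneg (hf0 i) (hg0 i))]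
    exact Real.sqrt_le_sqrt h1
  refine h2.trans ?_
  rw [Real.sqrt_mul (Finset.sum_nonneg fun i _ => sq_nonneg _)]
  exact mul_le_mul (Real.sqrt_le_sqrt (Summable.sum_le_tsum u (fun i _ => sq_nonneg _) hf))
    (Real.sqrt_le_sqrt (Summable.sum_le_tsum u (fun i _ => sq_nonneg _) hg))
    (Real.sqrt_nonneg _) (Real.sqrt_nonneg _)

lemma my_summable_inv : Summable fun k : ℤ => (1 + (k : ℝ) ^ 2)⁻¹ := by
  have hnat : Summable fun n : ℕ => (1 + (n : ℝ) ^ 2)⁻¹ := by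
    have base : Summable fun n : ℕ => 1 / ((n : ℝ) + 1) ^ 2 := by
      have h0 : Summable fun n : ℕ => 1 / (n : ℝ) ^ 2 :=
        Real.summable_one_div_nat_pow.2 one_lt_two
      have := (summable_nat_add_iff (f := fun n : ℕ => 1 / (n : ℝ) ^ 2) 1).2 h0
      refine this.congr fun n => ?_
      push_cast
      ring
    refine Summable.of_nonneg_of_le (fun n => by positivity) (fun n => ?_)
      (base.mul_left 2)
    rw [inv_eq_one_div, mul_one_div, div_le_div_iff₀ (by positivity) (by positivity)]
    nlinarith [sq_nonneg ((n : ℝ) - 1)]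
  refine Summable.of_nat_of_neg hnat ?_
  refine hnat.congr fun n => ?_
  push_cast
  ring_nf


/-- for `s > 1/2` there is `C` such that for every horizontal vector
field `u̲ = u̲(x₃) ∈ H^{s+1}(𝕋¹)` (Fourier coefficients `u1, u2` in the vertical
frequency) and every `v ∈ H^{s+1}(𝕋³)` (so `∇_h v ∈ H^s`), one has
`|⟨u̲·∇_h v, v⟩_{H^s(𝕋³)}| ≤ C (‖u̲‖_{H^s(𝕋¹)} + ‖u̲‖_{H^{s+1}(𝕋¹)}) ‖v‖_{H^s(𝕋³)} ‖∇_h v‖_{H^s(𝕋³)}`,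
where `(u̲·∇_h v)^(n) = Σ_{k₃} (i n₁ û̲¹(k₃) + i n₂ û̲²(k₃)) v̂(n_h, n₃-k₃)`. -/
theorem Hs_estimate_vertical_average_transport (s : ℝ) (hs : 1 / 2 < s) :
    ∃ C : ℝ, 0 < C ∧
      ∀ (u1 u2 : ℤ → ℂ) (v : ℤ × ℤ × ℤ → ℂ),
        Summable (fun k : ℤ => (1 + (k : ℝ) ^ 2) ^ (s + 1) * (‖u1 k‖ ^ 2 + ‖u2 k‖ ^ 2)) →
        Summable (fun n : ℤ × ℤ × ℤ => (1 + freqSq n) ^ (s + 1) * ‖v n‖ ^ 2) →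
        ‖∑' n : ℤ × ℤ × ℤ, (((1 + freqSq n) ^ s : ℝ) : ℂ) *
            ((∑' k₃ : ℤ, (Complex.I * (n.1 : ℂ) * u1 k₃ + Complex.I * (n.2.1 : ℂ) * u2 k₃) *
                v (n.1, n.2.1, n.2.2 - k₃)) * (starRingEnd ℂ) (v n))‖
          ≤ C * (Real.sqrt (∑' k : ℤ, (1 + (k : ℝ) ^ 2) ^ s * (‖u1 k‖ ^ 2 + ‖u2 k‖ ^ 2))
                + Real.sqrt (∑' k : ℤ, (1 + (k : ℝ) ^ 2) ^ (s + 1) * (‖u1 k‖ ^ 2 + ‖u2 k‖ ^ 2)))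
              * Real.sqrt (∑' n : ℤ × ℤ × ℤ, (1 + freqSq n) ^ s * ‖v n‖ ^ 2)
              * Real.sqrt (∑' n : ℤ × ℤ × ℤ,
                  ((n.1 : ℝ) ^ 2 + (n.2.1 : ℝ) ^ 2) * (1 + freqSq n) ^ s * ‖v n‖ ^ 2) := by
  have hs0 : (0 : ℝ) ≤ s := le_of_lt (lt_trans (by norm_num) hs)
  set I0 : ℝ := ∑' k : ℤ, (1 + (k : ℝ) ^ 2)⁻¹ with hI0def
  have hI0 : (0 : ℝ) ≤ Real.sqrt I0 := Real.sqrt_nonneg _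
  refine ⟨(2 : ℝ) ^ (s / 2) * Real.sqrt I0 + 1, by positivity, ?_⟩
  intro u1 u2 v hU hV
  set C : ℝ := (2 : ℝ) ^ (s / 2) * Real.sqrt I0 + 1 with hCdef
  -- basic positivity facts
  have hf0 : ∀ n : ℤ × ℤ × ℤ, (0 : ℝ) ≤ freqSq n := by
    intro n; unfold freqSq; positivity
  have hfpos : ∀ n : ℤ × ℤ × ℤ, (0 : ℝ) < 1 + freqSq n := by
    intro n; unfold freqSq; positivity
  have hfone : ∀ n : ℤ × ℤ × ℤ, (1 : ℝ) ≤ 1 + freqSq n := fun n => le_add_of_nonneg_right (hf0 n)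
  have hkpos : ∀ k : ℤ, (0 : ℝ) < 1 + (k : ℝ) ^ 2 := fun k => by positivity
  have pow_half_sq : ∀ (t x : ℝ), 0 < x → (x ^ (t / 2)) ^ 2 = x ^ t := by
    intro t x hx
    rw [← Real.rpow_natCast (x ^ (t / 2)) 2, ← Real.rpow_mul hx.le]
    norm_num
  have pow_split : ∀ x : ℝ, 0 < x → x ^ (s / 2) * x ^ (s / 2) = x ^ s := by
    intro x hx
    rw [← Real.rpow_add hx]; ring_nf
  -- the weight functions
  set W : ℤ → ℝ := fun k => Real.sqrt (‖u1 k‖ ^ 2 + ‖u2 k‖ ^ 2) with hWdef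
  have hW0 : ∀ k, 0 ≤ W k := fun k => Real.sqrt_nonneg _
  have hWsq : ∀ k, W k ^ 2 = ‖u1 k‖ ^ 2 + ‖u2 k‖ ^ 2 := fun k => Real.sq_sqrt (by positivity)
  set a : ℤ → ℝ := fun k => (1 + (k : ℝ) ^ 2) ^ ((s + 1) / 2) * W k with hadef
  have ha0 : ∀ k, 0 ≤ a k := fun k => mul_nonneg (Real.rpow_nonneg (hkpos k).le _) (hW0 k)
  have hasq : ∀ k, a k ^ 2 = (1 + (k : ℝ) ^ 2) ^ (s + 1) * (‖u1 k‖ ^ 2 + ‖u2 k‖ ^ 2) := by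
    intro k
    rw [hadef]; dsimp only
    rw [mul_pow, hWsq, pow_half_sq _ _ (hkpos k)]
  have hA : Summable fun k => a k ^ 2 := hU.congr fun k => (hasq k).symm
  set c : ℤ × ℤ × ℤ → ℝ := fun n => (1 + freqSq n) ^ (s / 2) * ‖v n‖ with hcdef
  have hc0 : ∀ n, 0 ≤ c n := fun n => mul_nonneg (Real.rpow_nonneg (hfpos n).le _) (norm_nonneg _)
  have hcsq : ∀ n, c n ^ 2 = (1 + freqSq n) ^ s * ‖v n‖ ^ 2 := by
    intro n
    rw [hcdef]; dsimp only
    rw [mul_pow, pow_half_sq _ _ (hfpos n)]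
  have hc : Summable fun n => c n ^ 2 := by
    refine Summable.of_nonneg_of_le (fun n => sq_nonneg _) (fun n => ?_) hV
    rw [hcsq]
    exact mul_le_mul_of_nonneg_right
      (Real.rpow_le_rpow_of_exponent_le (hfone n) (by linarith))
      (sq_nonneg _)
  set d : ℤ × ℤ × ℤ → ℝ :=
    fun n => Real.sqrt ((n.1 : ℝ) ^ 2 + (n.2.1 : ℝ) ^ 2) * ((1 + freqSq n) ^ (s / 2) * ‖v n‖)
    with hddef
  have hd0 : ∀ n, 0 ≤ d n := fun n => mul_nonneg (Real.sqrt_nonneg _) (hc0 n)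
  have hdsq : ∀ n, d n ^ 2 =
      ((n.1 : ℝ) ^ 2 + (n.2.1 : ℝ) ^ 2) * ((1 + freqSq n) ^ s * ‖v n‖ ^ 2) := by
    intro n
    rw [hddef]; dsimp only
    rw [mul_pow, mul_pow, pow_half_sq _ _ (hfpos n), Real.sq_sqrt (by positivity)]
  have hhle : ∀ n : ℤ × ℤ × ℤ, ((n.1 : ℝ) ^ 2 + (n.2.1 : ℝ) ^ 2) ≤ 1 + freqSq n := by
    intro n; unfold freqSq; nlinarith [sq_nonneg ((n.2.2 : ℝ))]
  have hd : Summable fun n => d n ^ 2 := by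
    refine Summable.of_nonneg_of_le (fun n => sq_nonneg _) (fun n => ?_) hV
    rw [hdsq]
    calc ((n.1 : ℝ) ^ 2 + (n.2.1 : ℝ) ^ 2) * ((1 + freqSq n) ^ s * ‖v n‖ ^ 2)
        ≤ (1 + freqSq n) * ((1 + freqSq n) ^ s * ‖v n‖ ^ 2) := by
          exact mul_le_mul_of_nonneg_right (hhle n)
            (mul_nonneg (Real.rpow_nonneg (hfpos n).le _) (sq_nonneg _))
      _ = (1 + freqSq n) ^ (s + 1) * ‖v n‖ ^ 2 := by
          rw [Real.rpow_add_one (hfpos n).ne']; ring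
  set r : ℤ → ℝ := fun k => (1 + (k : ℝ) ^ 2) ^ (s / 2) * W k with hrdef
  have hr0 : ∀ k, 0 ≤ r k := fun k => mul_nonneg (Real.rpow_nonneg (hkpos k).le _) (hW0 k)
  have hfactor : ∀ k : ℤ, Real.sqrt ((1 + (k : ℝ) ^ 2)⁻¹) * a k = r k := by
    intro k
    rw [hadef, hrdef]; dsimp only
    rw [← mul_assoc, Real.sqrt_eq_rpow, ← Real.rpow_neg_one (1 + (k:ℝ)^2),
      ← Real.rpow_mul (hkpos k).le, ← Real.rpow_add (hkpos k)]
    congr 1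
    ring
  have hinv2 : Summable fun k : ℤ => Real.sqrt ((1 + (k : ℝ) ^ 2)⁻¹) ^ 2 := by
    refine my_summable_inv.congr fun k => ?_
    rw [Real.sq_sqrt (by positivity)]
  have hrS : Summable r := (my_summable_mul hinv2 hA).congr hfactor
  have hrle : ∑' k, r k ≤ Real.sqrt I0 * Real.sqrt (∑' k, a k ^ 2) := by
    rw [← tsum_congr hfactor]
    refine (my_tsum_mul_le (fun k => Real.sqrt_nonneg _) ha0 hinv2 hA).trans ?_
    refine mul_le_mul_of_nonneg_right (le_of_eq ?_) (Real.sqrt_nonneg _)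
    rw [hI0def]
    congr 1
    exact tsum_congr fun k => Real.sq_sqrt (by positivity)
  -- shift invariance
  have hshift : ∀ (k : ℤ) (F : ℤ × ℤ × ℤ → ℝ), Summable F →
      Summable (fun n : ℤ × ℤ × ℤ => F (n.1, n.2.1, n.2.2 - k)) ∧
        (∑' n : ℤ × ℤ × ℤ, F (n.1, n.2.1, n.2.2 - k)) = ∑' n, F n := by
    intro k F hF
    set e : (ℤ × ℤ × ℤ) ≃ (ℤ × ℤ × ℤ) :=
      (Equiv.refl ℤ).prodCongr ((Equiv.refl ℤ).prodCongr (Equiv.subRight k)) with hedef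
    have he : ∀ n : ℤ × ℤ × ℤ, e n = (n.1, n.2.1, n.2.2 - k) := fun n => rfl
    constructor
    · exact (hF.comp_injective e.injective).congr fun n => by
        rw [Function.comp_apply, he]
    · rw [← e.tsum_eq F]
      exact tsum_congr fun n => by rw [he]
  -- slices of v are square-summable
  have hV' : Summable fun n : ℤ × ℤ × ℤ => ‖v n‖ ^ 2 := by
    refine Summable.of_nonneg_of_le (fun n => sq_nonneg _) (fun n => ?_) hV
    nth_rewrite 1 [← one_mul (‖v n‖ ^ 2)]
    exact mul_le_mul_of_nonneg_right (Real.one_le_rpow (hfone n) (by linarith)) (sq_nonneg _)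
  have hVslice : ∀ (p q t : ℤ), Summable fun k : ℤ => ‖v (p, q, t - k)‖ ^ 2 := by
    intro p q t
    have h1 : Summable fun m : ℤ => ‖v (p, q, m)‖ ^ 2 := by
      refine hV'.comp_injective (i := fun m : ℤ => ((p, q, m) : ℤ × ℤ × ℤ)) ?_
      intro x y h
      simpa using h
    exact (h1.comp_injective (Equiv.subLeft t).injective).congr fun k => by
      simp [Equiv.subLeft]
  have hWsum : Summable fun k => W k ^ 2 := by
    refine Summable.of_nonneg_of_le (fun k => sq_nonneg _) (fun k => ?_) hU
    rw [hWsq]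
    nth_rewrite 1 [← one_mul (‖u1 k‖ ^ 2 + ‖u2 k‖ ^ 2)]
    exact mul_le_mul_of_nonneg_right
      (Real.one_le_rpow (le_add_of_nonneg_right (sq_nonneg _)) (by linarith)) (by positivity)
  have hr2 : Summable fun k : ℤ => r k ^ 2 := by
    refine Summable.of_nonneg_of_le (fun k => sq_nonneg _) (fun k => ?_) hU
    rw [hrdef]; dsimp only
    rw [mul_pow, hWsq, pow_half_sq _ _ (hkpos k)]
    exact mul_le_mul_of_nonneg_right
      (Real.rpow_le_rpow_of_exponent_le (le_add_of_nonneg_right (sq_nonneg _)) (by linarith))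
      (by positivity)
  have hdslice : ∀ (p q t : ℤ), Summable fun k : ℤ => d (p, q, t - k) ^ 2 := by
    intro p q t
    have h1 : Summable fun m : ℤ => d (p, q, m) ^ 2 := by
      refine hd.comp_injective (i := fun m : ℤ => ((p, q, m) : ℤ × ℤ × ℤ)) ?_
      intro x y h
      simpa using h
    exact (h1.comp_injective (Equiv.subLeft t).injective).congr fun k => by
      simp [Equiv.subLeft]
  -- coefficient bound
  have hm : ∀ (n : ℤ × ℤ × ℤ) (k : ℤ),
      ‖Complex.I * (n.1 : ℂ) * u1 k + Complex.I * (n.2.1 : ℂ) * u2 k‖ ≤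
        Real.sqrt ((n.1 : ℝ) ^ 2 + (n.2.1 : ℝ) ^ 2) * W k := by
    intro n k
    have h1 : ‖Complex.I * (n.1 : ℂ) * u1 k + Complex.I * (n.2.1 : ℂ) * u2 k‖ ≤
        |(n.1 : ℝ)| * ‖u1 k‖ + |(n.2.1 : ℝ)| * ‖u2 k‖ := by
      refine (norm_add_le _ _).trans ?_
      simp [norm_mul]
    refine h1.trans ?_
    rw [hWdef]; dsimp only
    rw [← Real.sqrt_mul (by positivity), ← Real.sqrt_sq
      (by positivity : (0:ℝ) ≤ |(n.1 : ℝ)| * ‖u1 k‖ + |(n.2.1 : ℝ)| * ‖u2 k‖)]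
    apply Real.sqrt_le_sqrt
    nlinarith [sq_nonneg (|(n.1 : ℝ)| * ‖u2 k‖ - |(n.2.1 : ℝ)| * ‖u1 k‖), sq_abs ((n.1 : ℝ)),
      sq_abs ((n.2.1 : ℝ)), abs_nonneg ((n.1 : ℝ)), abs_nonneg ((n.2.1 : ℝ)),
      norm_nonneg (u1 k), norm_nonneg (u2 k)]
  -- weight inequality
  have hweight : ∀ (n : ℤ × ℤ × ℤ) (k : ℤ), (1 + freqSq n) ^ (s / 2) ≤
      2 ^ (s / 2) * ((1 + (k : ℝ) ^ 2) ^ (s / 2) *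
        (1 + freqSq (n.1, n.2.1, n.2.2 - k)) ^ (s / 2)) := by
    intro n k
    have hbase : 1 + freqSq n ≤
        2 * ((1 + (k : ℝ) ^ 2) * (1 + freqSq (n.1, n.2.1, n.2.2 - k))) := by
      unfold freqSq
      push_cast
      nlinarith [sq_nonneg ((n.2.2 : ℝ) - 2 * (k : ℝ)), sq_nonneg ((k : ℝ)),
        sq_nonneg ((n.1 : ℝ)), sq_nonneg ((n.2.1 : ℝ)), sq_nonneg ((n.2.2 : ℝ) - (k : ℝ)),
        mul_nonneg (sq_nonneg ((k : ℝ))) (sq_nonneg ((n.1 : ℝ))),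
        mul_nonneg (sq_nonneg ((k : ℝ))) (sq_nonneg ((n.2.1 : ℝ))),
        mul_nonneg (sq_nonneg ((k : ℝ))) (sq_nonneg ((n.2.2 : ℝ) - (k : ℝ)))]
    calc (1 + freqSq n) ^ (s / 2)
        ≤ (2 * ((1 + (k : ℝ) ^ 2) * (1 + freqSq (n.1, n.2.1, n.2.2 - k)))) ^ (s / 2) :=
          Real.rpow_le_rpow (hfpos n).le hbase (by linarith)
      _ = 2 ^ (s / 2) * ((1 + (k : ℝ) ^ 2) ^ (s / 2) *
            (1 + freqSq (n.1, n.2.1, n.2.2 - k)) ^ (s / 2)) := by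
          rw [Real.mul_rpow (by norm_num) (mul_nonneg (hkpos k).le (hfpos _).le),
            Real.mul_rpow (hkpos k).le (hfpos _).le]
  -- the dominating kernel
  set g : ℤ × (ℤ × ℤ × ℤ) → ℝ :=
    fun p => r p.1 * d (p.2.1, p.2.2.1, p.2.2.2 - p.1) * c p.2 with hgdef
  have hg0 : ∀ p, 0 ≤ g p := fun p => mul_nonneg (mul_nonneg (hr0 _) (hd0 _)) (hc0 _)
  have hd2 : ∀ k : ℤ, Summable fun n : ℤ × ℤ × ℤ => d (n.1, n.2.1, n.2.2 - k) ^ 2 :=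
    fun k => (hshift k _ hd).1
  have hd2eq : ∀ k : ℤ, ∑' n : ℤ × ℤ × ℤ, d (n.1, n.2.1, n.2.2 - k) ^ 2 = ∑' n, d n ^ 2 :=
    fun k => (hshift k _ hd).2
  have hslice_k : ∀ k : ℤ, Summable fun n : ℤ × ℤ × ℤ => g (k, n) := by
    intro k
    refine ((my_summable_mul (hd2 k) hc).mul_left (r k)).congr fun n => ?_
    rw [hgdef]; dsimp only; ring
  have hgk : ∀ n : ℤ × ℤ × ℤ, Summable fun k : ℤ => g (k, n) := by
    intro n
    refine ((my_summable_mul hr2 (hdslice n.1 n.2.1 n.2.2)).mul_right (c n)).congr fun k => ?_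
    rw [hgdef]
  have hslice_sum : ∀ k : ℤ, ∑' n, g (k, n) ≤
      r k * (Real.sqrt (∑' n, d n ^ 2) * Real.sqrt (∑' n, c n ^ 2)) := by
    intro k
    have h1 : ∑' n, g (k, n) = r k * ∑' n : ℤ × ℤ × ℤ, d (n.1, n.2.1, n.2.2 - k) * c n := by
      rw [← tsum_mul_left]
      exact tsum_congr fun n => by rw [hgdef]; dsimp only; ring
    rw [h1]
    refine mul_le_mul_of_nonneg_left ?_ (hr0 k)
    refine (my_tsum_mul_le (fun n => hd0 _) hc0 (hd2 k) hc).trans (le_of_eq ?_)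
    rw [hd2eq k]
  have hGsum2 : Summable fun k : ℤ => ∑' n, g (k, n) :=
    Summable.of_nonneg_of_le (fun k => tsum_nonneg fun n => hg0 _) hslice_sum
      (hrS.mul_right (Real.sqrt (∑' n, d n ^ 2) * Real.sqrt (∑' n, c n ^ 2)))
  have hG : Summable g := (summable_prod_of_nonneg (fun p => hg0 p)).2 ⟨hslice_k, hGsum2⟩
  have hGswap : Summable fun p : (ℤ × ℤ × ℤ) × ℤ => g (p.2, p.1) := by
    have h := (Equiv.prodComm (ℤ × ℤ × ℤ) ℤ).summable_iff.mpr hG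
    exact h.congr fun p => rfl
  have hsum_outer : Summable fun n : ℤ × ℤ × ℤ => ∑' k, g (k, n) :=
    ((summable_prod_of_nonneg (f := fun p : (ℤ × ℤ × ℤ) × ℤ => g (p.2, p.1))
      (fun p => hg0 _)).1 hGswap).2
  have hswap_eq : ∑' n : ℤ × ℤ × ℤ, ∑' k : ℤ, g (k, n) = ∑' k : ℤ, ∑' n : ℤ × ℤ × ℤ, g (k, n) := by
    have h1 : ∑' p : ℤ × (ℤ × ℤ × ℤ), g p = ∑' k, ∑' n, g (k, n) := Summable.tsum_prod hG
    have h2 : ∑' p : (ℤ × ℤ × ℤ) × ℤ, g (p.2, p.1) = ∑' n, ∑' k, g (k, n) := Summable.tsum_prod hGswap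
    have h3 : ∑' p : (ℤ × ℤ × ℤ) × ℤ, g (p.2, p.1) = ∑' p : ℤ × (ℤ × ℤ × ℤ), g p :=
      (Equiv.prodComm (ℤ × ℤ × ℤ) ℤ).tsum_eq g
    rw [← h2, h3, h1]
  -- pointwise estimate
  have hterm : ∀ n : ℤ × ℤ × ℤ,
      ‖(((1 + freqSq n) ^ s : ℝ) : ℂ) *
          ((∑' k₃ : ℤ, (Complex.I * (n.1 : ℂ) * u1 k₃ + Complex.I * (n.2.1 : ℂ) * u2 k₃) *
              v (n.1, n.2.1, n.2.2 - k₃)) * (starRingEnd ℂ) (v n))‖ ≤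
        2 ^ (s / 2) * ∑' k, g (k, n) := by
    intro n
    have hinner2 : Summable fun k : ℤ => W k * ‖v (n.1, n.2.1, n.2.2 - k)‖ :=
      my_summable_mul hWsum (hVslice n.1 n.2.1 n.2.2)
    have hptw : ∀ k : ℤ,
        ‖(Complex.I * (n.1 : ℂ) * u1 k + Complex.I * (n.2.1 : ℂ) * u2 k) *
            v (n.1, n.2.1, n.2.2 - k)‖ ≤
          Real.sqrt ((n.1 : ℝ) ^ 2 + (n.2.1 : ℝ) ^ 2) * (W k * ‖v (n.1, n.2.1, n.2.2 - k)‖) := by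
      intro k
      rw [norm_mul]
      calc ‖Complex.I * (n.1 : ℂ) * u1 k + Complex.I * (n.2.1 : ℂ) * u2 k‖ *
            ‖v (n.1, n.2.1, n.2.2 - k)‖
          ≤ (Real.sqrt ((n.1 : ℝ) ^ 2 + (n.2.1 : ℝ) ^ 2) * W k) * ‖v (n.1, n.2.1, n.2.2 - k)‖ :=
            mul_le_mul_of_nonneg_right (hm n k) (norm_nonneg _)
        _ = Real.sqrt ((n.1 : ℝ) ^ 2 + (n.2.1 : ℝ) ^ 2) *
              (W k * ‖v (n.1, n.2.1, n.2.2 - k)‖) := by ring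
    have hnorms : Summable fun k : ℤ =>
        ‖(Complex.I * (n.1 : ℂ) * u1 k + Complex.I * (n.2.1 : ℂ) * u2 k) *
            v (n.1, n.2.1, n.2.2 - k)‖ :=
      Summable.of_nonneg_of_le (fun k => norm_nonneg _) hptw
        (hinner2.mul_left (Real.sqrt ((n.1 : ℝ) ^ 2 + (n.2.1 : ℝ) ^ 2)))
    have hT : ‖∑' k₃ : ℤ, (Complex.I * (n.1 : ℂ) * u1 k₃ + Complex.I * (n.2.1 : ℂ) * u2 k₃) *
          v (n.1, n.2.1, n.2.2 - k₃)‖ ≤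
        Real.sqrt ((n.1 : ℝ) ^ 2 + (n.2.1 : ℝ) ^ 2) *
          ∑' k, W k * ‖v (n.1, n.2.1, n.2.2 - k)‖ := by
      refine (norm_tsum_le_tsum_norm hnorms).trans ?_
      rw [← tsum_mul_left]
      exact Summable.tsum_le_tsum hptw hnorms
        (hinner2.mul_left (Real.sqrt ((n.1 : ℝ) ^ 2 + (n.2.1 : ℝ) ^ 2)))
    have hnorm_eq : ‖(((1 + freqSq n) ^ s : ℝ) : ℂ) *
        ((∑' k₃ : ℤ, (Complex.I * (n.1 : ℂ) * u1 k₃ + Complex.I * (n.2.1 : ℂ) * u2 k₃) *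
            v (n.1, n.2.1, n.2.2 - k₃)) * (starRingEnd ℂ) (v n))‖ =
        (1 + freqSq n) ^ s *
          (‖∑' k₃ : ℤ, (Complex.I * (n.1 : ℂ) * u1 k₃ + Complex.I * (n.2.1 : ℂ) * u2 k₃) *
              v (n.1, n.2.1, n.2.2 - k₃)‖ * ‖v n‖) := by
      rw [norm_mul, norm_mul, Complex.norm_real, Real.norm_eq_abs,
        abs_of_nonneg (Real.rpow_nonneg (hfpos n).le _), RCLike.norm_conj]
    rw [hnorm_eq]
    have hrw0 : (0 : ℝ) ≤ Real.sqrt ((n.1 : ℝ) ^ 2 + (n.2.1 : ℝ) ^ 2) := Real.sqrt_nonneg _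
    calc (1 + freqSq n) ^ s *
          (‖∑' k₃ : ℤ, (Complex.I * (n.1 : ℂ) * u1 k₃ + Complex.I * (n.2.1 : ℂ) * u2 k₃) *
              v (n.1, n.2.1, n.2.2 - k₃)‖ * ‖v n‖)
        ≤ (1 + freqSq n) ^ s *
            ((Real.sqrt ((n.1 : ℝ) ^ 2 + (n.2.1 : ℝ) ^ 2) *
              ∑' k, W k * ‖v (n.1, n.2.1, n.2.2 - k)‖) * ‖v n‖) :=
          mul_le_mul_of_nonneg_left (mul_le_mul_of_nonneg_right hT (norm_nonneg _))
            (Real.rpow_nonneg (hfpos n).le _)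
      _ = ∑' k : ℤ, ((1 + freqSq n) ^ s * Real.sqrt ((n.1 : ℝ) ^ 2 + (n.2.1 : ℝ) ^ 2) * ‖v n‖) *
            (W k * ‖v (n.1, n.2.1, n.2.2 - k)‖) := by
          rw [tsum_mul_left]; ring
      _ ≤ ∑' k : ℤ, 2 ^ (s / 2) * g (k, n) := by
          refine Summable.tsum_le_tsum (fun k => ?_)
            (hinner2.mul_left _) ((hgk n).mul_left _)
          have hM : (0 : ℝ) ≤ (1 + freqSq n) ^ (s / 2) * ‖v n‖ *
              (Real.sqrt ((n.1 : ℝ) ^ 2 + (n.2.1 : ℝ) ^ 2) *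
                (W k * ‖v (n.1, n.2.1, n.2.2 - k)‖)) := by
            refine mul_nonneg (mul_nonneg (Real.rpow_nonneg (hfpos n).le _) (norm_nonneg _)) ?_
            exact mul_nonneg hrw0 (mul_nonneg (hW0 k) (norm_nonneg _))
          have key := mul_le_mul_of_nonneg_right (hweight n k) hM
          have hfs : (1 + freqSq n) ^ s = (1 + freqSq n) ^ (s / 2) * (1 + freqSq n) ^ (s / 2) :=
            (pow_split _ (hfpos n)).symm
          rw [hgdef, hrdef, hddef, hcdef]; dsimp only
          rw [hfs]
          calc (1 + freqSq n) ^ (s / 2) * (1 + freqSq n) ^ (s / 2) *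
                Real.sqrt ((n.1 : ℝ) ^ 2 + (n.2.1 : ℝ) ^ 2) * ‖v n‖ *
                (W k * ‖v (n.1, n.2.1, n.2.2 - k)‖)
              = (1 + freqSq n) ^ (s / 2) *
                  ((1 + freqSq n) ^ (s / 2) * ‖v n‖ *
                    (Real.sqrt ((n.1 : ℝ) ^ 2 + (n.2.1 : ℝ) ^ 2) *
                      (W k * ‖v (n.1, n.2.1, n.2.2 - k)‖))) := by ring
            _ ≤ (2 ^ (s / 2) * ((1 + (k : ℝ) ^ 2) ^ (s / 2) *
                  (1 + freqSq (n.1, n.2.1, n.2.2 - k)) ^ (s / 2))) *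
                  ((1 + freqSq n) ^ (s / 2) * ‖v n‖ *
                    (Real.sqrt ((n.1 : ℝ) ^ 2 + (n.2.1 : ℝ) ^ 2) *
                      (W k * ‖v (n.1, n.2.1, n.2.2 - k)‖))) := key
            _ = 2 ^ (s / 2) * ((1 + (k : ℝ) ^ 2) ^ (s / 2) * W k *
                  (Real.sqrt (((n.1, n.2.1, n.2.2 - k) : ℤ × ℤ × ℤ).1 ^ 2 +
                      ((n.1, n.2.1, n.2.2 - k) : ℤ × ℤ × ℤ).2.1 ^ 2) *
                    ((1 + freqSq (n.1, n.2.1, n.2.2 - k)) ^ (s / 2) *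
                      ‖v (n.1, n.2.1, n.2.2 - k)‖)) *
                  ((1 + freqSq n) ^ (s / 2) * ‖v n‖)) := by ring
      _ = 2 ^ (s / 2) * ∑' k, g (k, n) := tsum_mul_left
  -- assemble
  have htermS : Summable fun n : ℤ × ℤ × ℤ =>
      ‖(((1 + freqSq n) ^ s : ℝ) : ℂ) *
          ((∑' k₃ : ℤ, (Complex.I * (n.1 : ℂ) * u1 k₃ + Complex.I * (n.2.1 : ℂ) * u2 k₃) *
              v (n.1, n.2.1, n.2.2 - k₃)) * (starRingEnd ℂ) (v n))‖ :=
    Summable.of_nonneg_of_le (fun n => norm_nonneg _) hterm (hsum_outer.mul_left _)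
  have hBeq : (∑' n : ℤ × ℤ × ℤ, (1 + freqSq n) ^ s * ‖v n‖ ^ 2) = ∑' n, c n ^ 2 :=
    tsum_congr fun n => (hcsq n).symm
  have hDeq : (∑' n : ℤ × ℤ × ℤ,
      ((n.1 : ℝ) ^ 2 + (n.2.1 : ℝ) ^ 2) * (1 + freqSq n) ^ s * ‖v n‖ ^ 2) = ∑' n, d n ^ 2 :=
    tsum_congr fun n => by rw [hdsq]; ring
  have hAeq : (∑' k : ℤ, (1 + (k : ℝ) ^ 2) ^ (s + 1) * (‖u1 k‖ ^ 2 + ‖u2 k‖ ^ 2)) =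
      ∑' k, a k ^ 2 := tsum_congr fun k => (hasq k).symm
  rw [hBeq, hDeq, hAeq]
  have hX0 : (0 : ℝ) ≤ Real.sqrt (∑' k : ℤ, (1 + (k : ℝ) ^ 2) ^ s * (‖u1 k‖ ^ 2 + ‖u2 k‖ ^ 2)) :=
    Real.sqrt_nonneg _
  have hB0 : (0 : ℝ) ≤ Real.sqrt (∑' n, c n ^ 2) := Real.sqrt_nonneg _
  have hD0 : (0 : ℝ) ≤ Real.sqrt (∑' n, d n ^ 2) := Real.sqrt_nonneg _
  have htwo0 : (0 : ℝ) ≤ (2 : ℝ) ^ (s / 2) := Real.rpow_nonneg (by norm_num) _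
  calc ‖∑' n : ℤ × ℤ × ℤ, (((1 + freqSq n) ^ s : ℝ) : ℂ) *
          ((∑' k₃ : ℤ, (Complex.I * (n.1 : ℂ) * u1 k₃ + Complex.I * (n.2.1 : ℂ) * u2 k₃) *
              v (n.1, n.2.1, n.2.2 - k₃)) * (starRingEnd ℂ) (v n))‖
      ≤ ∑' n : ℤ × ℤ × ℤ, ‖(((1 + freqSq n) ^ s : ℝ) : ℂ) *
          ((∑' k₃ : ℤ, (Complex.I * (n.1 : ℂ) * u1 k₃ + Complex.I * (n.2.1 : ℂ) * u2 k₃) *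
              v (n.1, n.2.1, n.2.2 - k₃)) * (starRingEnd ℂ) (v n))‖ :=
        norm_tsum_le_tsum_norm htermS
    _ ≤ ∑' n : ℤ × ℤ × ℤ, 2 ^ (s / 2) * ∑' k, g (k, n) :=
        Summable.tsum_le_tsum hterm htermS (hsum_outer.mul_left _)
    _ = 2 ^ (s / 2) * ∑' n : ℤ × ℤ × ℤ, ∑' k, g (k, n) := tsum_mul_left
    _ = 2 ^ (s / 2) * ∑' k : ℤ, ∑' n : ℤ × ℤ × ℤ, g (k, n) := by rw [hswap_eq]
    _ ≤ 2 ^ (s / 2) * ∑' k : ℤ,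
          r k * (Real.sqrt (∑' n, d n ^ 2) * Real.sqrt (∑' n, c n ^ 2)) :=
        mul_le_mul_of_nonneg_left
          (Summable.tsum_le_tsum hslice_sum hGsum2 (hrS.mul_right _)) htwo0
    _ = 2 ^ (s / 2) * ((∑' k, r k) *
          (Real.sqrt (∑' n, d n ^ 2) * Real.sqrt (∑' n, c n ^ 2))) := by rw [tsum_mul_right]
    _ ≤ 2 ^ (s / 2) * ((Real.sqrt I0 * Real.sqrt (∑' k, a k ^ 2)) *
          (Real.sqrt (∑' n, d n ^ 2) * Real.sqrt (∑' n, c n ^ 2))) :=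
        mul_le_mul_of_nonneg_left
          (mul_le_mul_of_nonneg_right hrle (mul_nonneg hD0 hB0)) htwo0
    _ = ((2 ^ (s / 2) * Real.sqrt I0) * Real.sqrt (∑' k, a k ^ 2)) *
          (Real.sqrt (∑' n, c n ^ 2) * Real.sqrt (∑' n, d n ^ 2)) := by ring
    _ ≤ (C * (Real.sqrt (∑' k : ℤ, (1 + (k : ℝ) ^ 2) ^ s * (‖u1 k‖ ^ 2 + ‖u2 k‖ ^ 2)) +
          Real.sqrt (∑' k, a k ^ 2))) *
          (Real.sqrt (∑' n, c n ^ 2) * Real.sqrt (∑' n, d n ^ 2)) := by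
        refine mul_le_mul_of_nonneg_right ?_ (mul_nonneg hB0 hD0)
        refine mul_le_mul ?_ (le_add_of_nonneg_left hX0) (Real.sqrt_nonneg _) ?_
        · rw [hCdef]; linarith
        · rw [hCdef]; positivity
    _ = C * (Real.sqrt (∑' k : ℤ, (1 + (k : ℝ) ^ 2) ^ s * (‖u1 k‖ ^ 2 + ‖u2 k‖ ^ 2)) +
          Real.sqrt (∑' k, a k ^ 2)) * Real.sqrt (∑' n, c n ^ 2) *
          Real.sqrt (∑' n, d n ^ 2) := by ring
end
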